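/- arXiv:1308.4296 — 5 statements merged into one kernel-verified Lean document; each statement's English description precedes it below -/
import Mathlib

section
/- Let e = 2 and let λ = (a, 1^b) be a hook partition of n with b even. If T is a standard λ-tableau whose residue sequence equals the residue sequence of the initial tableau T_λ (filled down the first column then along the first row), then for every i with 1 ≤ i ≤ ⌈n/2⌉ − 1, the entry 2i+1 occupies the node immediately following the node of 2i: if 2i lies in the first column then 2i+1 lies directly below it, and if 2i lies in the first row then 2i+1 lies directly to its right. -/
/-- The rank of `k` in the leg set `L`: the number of leg entries `≤ k`.  For `k` in the leg,
`k` sits in row `1 + rank`; for `k` in the arm, `k` sits in column `k - rank`. -/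
def legRank (L : Finset ℕ) (k : ℕ) : ℕ := (L.filter (· ≤ k)).card

/-- The residue (at `e = 2`) of the node occupied by `k` in the standard hook tableau whose
set of leg entries (other than the corner entry `1`) is `L`. -/
def resT (L : Finset ℕ) (k : ℕ) : ZMod 2 :=
  if k ∈ L then (legRank L k : ZMod 2) else ((k + 1 + legRank L k : ℕ) : ZMod 2)

lemma legRank_succ (L : Finset ℕ) (k : ℕ) :
    legRank L (k + 1) = legRank L k + (if k + 1 ∈ L then 1 else 0) := by
  unfold legRank
  by_cases h : k + 1 ∈ L
  · have hset : L.filter (· ≤ k + 1) = insert (k + 1) (L.filter (· ≤ k)) := by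
      ext x
      simp only [Finset.mem_filter, Finset.mem_insert]
      constructor
      · rintro ⟨hx, hle⟩
        rcases Nat.eq_or_lt_of_le hle with h1 | h1
        · exact Or.inl h1
        · exact Or.inr ⟨hx, by omega⟩
      · rintro (rfl | ⟨hx, hle⟩)
        · exact ⟨h, le_refl _⟩
        · exact ⟨hx, by omega⟩
    rw [hset, Finset.card_insert_of_notMem (by simp), if_pos h]
  · have hset : L.filter (· ≤ k + 1) = L.filter (· ≤ k) := by
      ext x
      simp only [Finset.mem_filter]
      constructor
      · rintro ⟨hx, hle⟩
        refine ⟨hx, ?_⟩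
        rcases Nat.eq_or_lt_of_le hle with h1 | h1
        · exact absurd (h1 ▸ hx) h
        · omega
      · rintro ⟨hx, hle⟩
        exact ⟨hx, by omega⟩
    rw [hset, if_neg h, Nat.add_zero]

lemma zmod2_cast_eq_iff (x y : ℕ) : (x : ZMod 2) = (y : ZMod 2) ↔ x % 2 = y % 2 :=
  ZMod.natCast_eq_natCast_iff x y 2

/-- Lemma `D_i`: for `e = 2` and a hook `λ = (a, 1^b)` with `b` even, if a
standard `λ`-tableau (encoded by its set `L` of leg entries) has residue sequence equal to
`i_λ = (0,1,0,1,…)`, then for all `1 ≤ i ≤ ⌈n/2⌉ - 1` the entry `2i+1` immediately follows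
`2i`: if `2i` is in the leg then `2i+1` is directly below it, and if `2i` is in the arm then
`2i+1` is directly to its right. -/
theorem specht_hook_domino_structure (n a b : ℕ) (hn : n = a + b) (ha : 1 ≤ a) (hb : Even b)
    (L : Finset ℕ) (hL : L ⊆ Finset.Icc 2 n) (hcard : L.card = b)
    (hres : ∀ k, 1 ≤ k → k ≤ n → resT L k = ((k + 1 : ℕ) : ZMod 2)) :
    ∀ i, 1 ≤ i → i ≤ (n + 1) / 2 - 1 →
      (2 * i ∈ L → 2 * i + 1 ∈ L ∧
          1 + legRank L (2 * i + 1) = (1 + legRank L (2 * i)) + 1) ∧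
      (2 * i ∉ L → 2 * i + 1 ∉ L ∧
          2 * i + 1 - legRank L (2 * i + 1) = (2 * i - legRank L (2 * i)) + 1) := by
  intro i hi1 hi2
  have hn2 : 2 ≤ n := by omega
  have h2i1 : 2 * i + 1 ≤ n := by omega
  have hr1 := hres (2 * i) (by omega) (by omega)
  have hr2 := hres (2 * i + 1) (by omega) h2i1
  have hstep := legRank_succ L (2 * i)
  have hbound : legRank L (2 * i) ≤ 2 * i := by
    have hsub : L.filter (· ≤ 2 * i) ⊆ Finset.Icc 2 (2 * i) := by
      intro x hx
      simp only [Finset.mem_filter] at hx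
      have := hL hx.1
      simp only [Finset.mem_Icc] at this ⊢
      omega
    have := Finset.card_le_card hsub
    simp only [Nat.card_Icc] at this
    unfold legRank
    omega
  constructor
  · intro hmem
    rw [resT, if_pos hmem, zmod2_cast_eq_iff] at hr1
    by_cases hmem' : 2 * i + 1 ∈ L
    · refine ⟨hmem', ?_⟩
      rw [if_pos hmem'] at hstep
      omega
    · exfalso
      rw [resT, if_neg hmem', zmod2_cast_eq_iff] at hr2
      rw [if_neg hmem'] at hstep
      omega
  · intro hmem
    rw [resT, if_neg hmem, zmod2_cast_eq_iff] at hr1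
    by_cases hmem' : 2 * i + 1 ∈ L
    · exfalso
      rw [resT, if_pos hmem', zmod2_cast_eq_iff] at hr2
      rw [if_pos hmem'] at hstep
      omega
    · refine ⟨hmem', ?_⟩
      rw [if_neg hmem'] at hstep
      omega
end

section
/- Let e = 2 and λ = (a, 1^b) be a hook partition of n = a + b with b even and n odd. The number of standard λ-tableaux whose residue sequence equals that of the initial tableau T_λ equals the number of ways to choose which of the (n−1)/2 dominoes [2i, 2i+1] (i = 1,…,(n−1)/2) lie in the leg, namely the binomial coefficient C((n−1)/2, b/2). -/
lemma resT_eq_iff (L : Finset ℕ) (k : ℕ) :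
    resT L k = ((k + 1 : ℕ) : ZMod 2) ↔
      legRank L k % 2 = (if k ∈ L then (k + 1) % 2 else 0) := by
  unfold resT
  by_cases h : k ∈ L
  · rw [if_pos h, if_pos h, ZMod.natCast_eq_natCast_iff, Nat.ModEq]
  · rw [if_neg h, if_neg h, ZMod.natCast_eq_natCast_iff, Nat.ModEq]
    omega

lemma legRank_zero (L : Finset ℕ) (h0 : 0 ∉ L) : legRank L 0 = 0 := by
  unfold legRank
  rw [Finset.card_eq_zero, Finset.filter_eq_empty_iff]
  intro x hx hle
  have : x = 0 := by omega
  exact h0 (this ▸ hx)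

lemma legRank_parity (L : Finset ℕ) (h0 : 0 ∉ L) (h1 : 1 ∉ L)
    (hpair : ∀ i, 1 ≤ i → (2 * i ∈ L ↔ 2 * i + 1 ∈ L)) (k : ℕ) :
    legRank L k % 2 = if k ∈ L then (k + 1) % 2 else 0 := by
  induction k with
  | zero =>
    rw [if_neg h0, legRank_zero L h0]
  | succ k ih =>
    rw [legRank_succ]
    rcases Nat.even_or_odd k with he | ho
    · -- k even, k+1 odd
      by_cases hk0 : k = 0
      · subst hk0
        rw [if_neg h1, if_neg h1, legRank_zero L h0]
      · obtain ⟨i, hi⟩ := he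
        have h1i : 1 ≤ i := by omega
        have hp := hpair i h1i
        have h2i : 2 * i = k := by omega
        rw [h2i] at hp
        by_cases hm : k + 1 ∈ L
        · have hkL : k ∈ L := hp.mpr hm
          rw [if_pos hm, if_pos hm]
          rw [if_pos hkL] at ih
          omega
        · have hkL : k ∉ L := fun h => hm (hp.mp h)
          rw [if_neg hm, if_neg hm]
          rw [if_neg hkL] at ih
          omega
    · -- k odd, so legRank L k is even either way
      obtain ⟨t, ht⟩ := ho
      have hiheven : legRank L k % 2 = 0 := by
        by_cases hkL : k ∈ L
        · rw [if_pos hkL] at ih; omega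
        · rw [if_neg hkL] at ih; exact ih
      by_cases hm : k + 1 ∈ L
      · rw [if_pos hm, if_pos hm]; omega
      · rw [if_neg hm, if_neg hm]; omega

lemma mem_dominoes (S : Finset ℕ) (x : ℕ) :
    x ∈ S.biUnion (fun i => ({2 * i, 2 * i + 1} : Finset ℕ)) ↔
      ∃ i ∈ S, x = 2 * i ∨ x = 2 * i + 1 := by
  simp [Finset.mem_biUnion]

lemma double_mem_dominoes (S : Finset ℕ) (i : ℕ) :
    2 * i ∈ S.biUnion (fun j => ({2 * j, 2 * j + 1} : Finset ℕ)) ↔ i ∈ S := by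
  rw [mem_dominoes]
  constructor
  · rintro ⟨j, hj, h | h⟩
    · have : i = j := by omega
      rwa [this]
    · omega
  · intro h; exact ⟨i, h, Or.inl rfl⟩

lemma double_succ_mem_dominoes (S : Finset ℕ) (i : ℕ) :
    2 * i + 1 ∈ S.biUnion (fun j => ({2 * j, 2 * j + 1} : Finset ℕ)) ↔ i ∈ S := by
  rw [mem_dominoes]
  constructor
  · rintro ⟨j, hj, h | h⟩
    · omega
    · have : i = j := by omega
      rwa [this]
  · intro h; exact ⟨i, h, Or.inr rfl⟩

lemma card_dominoes (S : Finset ℕ) :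
    (S.biUnion (fun i => ({2 * i, 2 * i + 1} : Finset ℕ))).card = 2 * S.card := by
  rw [Finset.card_biUnion]
  · rw [Finset.sum_congr rfl (fun i _ => ?_), Finset.sum_const, smul_eq_mul, mul_comm]
    rw [Finset.card_insert_of_notMem (by simp), Finset.card_singleton]
  · intro x _ y _ hxy
    rw [Function.onFun, Finset.disjoint_left]
    intro z hz hz'
    simp only [Finset.mem_insert, Finset.mem_singleton] at hz hz'
    omega

open Classical in
/-- for `e = 2`, `λ = (a, 1^b)` a hook partition of `n = a + b` with `b` even
and `n` odd, the number of standard `λ`-tableaux (encoded by their `b`-element sets of leg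
entries `L ⊆ {2, …, n}`) whose residue sequence equals that of the initial tableau is
`C((n-1)/2, b/2)`. -/
theorem card_domino_tableaux_hook (n a b : ℕ) (hn : n = a + b) (ha : 1 ≤ a) (hb : Even b)
    (hodd : Odd n) :
    (((Finset.Icc 2 n).powersetCard b).filter
        (fun L => ∀ k ∈ Finset.Icc 1 n, resT L k = ((k + 1 : ℕ) : ZMod 2))).card =
      Nat.choose ((n - 1) / 2) (b / 2) := by
  classical
  rw [Finset.filter_congr_decidable]
  obtain ⟨m, hm⟩ : ∃ m, n = 2 * m + 1 := by
    obtain ⟨t, ht⟩ := hodd; exact ⟨t, by omega⟩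
  obtain ⟨c, hc⟩ : ∃ c, b = 2 * c := by
    obtain ⟨t, ht⟩ := hb; exact ⟨t, by omega⟩
  have hm' : (n - 1) / 2 = m := by omega
  have hc' : b / 2 = c := by omega
  rw [hm', hc']
  -- the pairing property extracted from the residue condition
  have key_pair : ∀ L : Finset ℕ, L ⊆ Finset.Icc 2 n →
      (∀ k ∈ Finset.Icc 1 n, resT L k = ((k + 1 : ℕ) : ZMod 2)) →
      ∀ i, 1 ≤ i → i ≤ m → (2 * i ∈ L ↔ 2 * i + 1 ∈ L) := by
    intro L hLsub hcond i h1i him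
    have hk1 : 2 * i ∈ Finset.Icc 1 n := by rw [Finset.mem_Icc]; omega
    have hk2 : 2 * i + 1 ∈ Finset.Icc 1 n := by rw [Finset.mem_Icc]; omega
    have q1 := (resT_eq_iff L (2 * i)).mp (hcond _ hk1)
    have q2 := (resT_eq_iff L (2 * i + 1)).mp (hcond _ hk2)
    have hstep := legRank_succ L (2 * i)
    constructor
    · intro h
      by_contra h'
      rw [if_pos h] at q1
      rw [if_neg h'] at q2
      rw [if_neg h'] at hstep
      omega
    · intro h
      by_contra h'
      rw [if_neg h'] at q1
      rw [if_pos h] at q2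
      rw [if_pos h] at hstep
      omega
  rw [show Nat.choose m c = ((Finset.Icc 1 m).powersetCard c).card by
    rw [Finset.card_powersetCard, Nat.card_Icc, Nat.add_sub_cancel]]
  refine Finset.card_bij'
    (fun L _ => (Finset.Icc 1 m).filter (fun j => 2 * j ∈ L))
    (fun S _ => S.biUnion (fun i => ({2 * i, 2 * i + 1} : Finset ℕ)))
    ?_ ?_ ?_ ?_
  -- hi : image of forward map lands in target
  · intro L hL
    obtain ⟨hLp, hcond⟩ := Finset.mem_filter.mp hL
    obtain ⟨hsub, hcard⟩ := Finset.mem_powersetCard.mp hLp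
    have hpair := key_pair L hsub hcond
    have hrec : ((Finset.Icc 1 m).filter (fun j => 2 * j ∈ L)).biUnion
        (fun i => ({2 * i, 2 * i + 1} : Finset ℕ)) = L := by
      ext x
      rw [mem_dominoes]
      constructor
      · rintro ⟨i, hi, hx⟩
        rw [Finset.mem_filter, Finset.mem_Icc] at hi
        obtain ⟨⟨h1i, him⟩, h2i⟩ := hi
        rcases hx with rfl | rfl
        · exact h2i
        · exact (hpair i h1i him).mp h2i
      · intro hx
        have hxr : 2 ≤ x ∧ x ≤ n := by
          have := hsub hx; rw [Finset.mem_Icc] at this; exact this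
        rcases Nat.even_or_odd x with he | ho
        · obtain ⟨i, hi⟩ := he
          have hxi : x = 2 * i := by omega
          refine ⟨i, ?_, Or.inl hxi⟩
          rw [Finset.mem_filter, Finset.mem_Icc]
          exact ⟨⟨by omega, by omega⟩, hxi ▸ hx⟩
        · obtain ⟨i, hi⟩ := ho
          have hxi : x = 2 * i + 1 := by omega
          refine ⟨i, ?_, Or.inr hxi⟩
          rw [Finset.mem_filter, Finset.mem_Icc]
          refine ⟨⟨by omega, by omega⟩, ?_⟩
          exact (hpair i (by omega) (by omega)).mpr (hxi ▸ hx)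
    refine Finset.mem_powersetCard.mpr ⟨Finset.filter_subset _ _, ?_⟩
    have hcd := card_dominoes ((Finset.Icc 1 m).filter (fun j => 2 * j ∈ L))
    rw [hrec, hcard] at hcd
    show ((Finset.Icc 1 m).filter (fun j => 2 * j ∈ L)).card = c
    omega
  -- hj : backward map lands in source
  · intro S hS
    obtain ⟨hsub, hcard⟩ := Finset.mem_powersetCard.mp hS
    have hbound : ∀ i ∈ S, 1 ≤ i ∧ i ≤ m := by
      intro i hi; have := hsub hi; rw [Finset.mem_Icc] at this; exact this
    refine Finset.mem_filter.mpr ⟨Finset.mem_powersetCard.mpr ⟨?_, ?_⟩, ?_⟩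
    · intro x hx
      rw [mem_dominoes] at hx
      obtain ⟨i, hi, hx⟩ := hx
      obtain ⟨h1, h2⟩ := hbound i hi
      rw [Finset.mem_Icc]
      omega
    · rw [card_dominoes, hcard]; omega
    · intro k hk
      rw [resT_eq_iff]
      apply legRank_parity
      · rw [mem_dominoes]
        rintro ⟨i, hi, h | h⟩ <;> exact absurd (hbound i hi).1 (by omega)
      · rw [mem_dominoes]
        rintro ⟨i, hi, h | h⟩ <;> exact absurd (hbound i hi).1 (by omega)
      · intro i _
        rw [double_mem_dominoes, double_succ_mem_dominoes]
  -- left inverse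
  · intro L hL
    obtain ⟨hLp, hcond⟩ := Finset.mem_filter.mp hL
    obtain ⟨hsub, hcard⟩ := Finset.mem_powersetCard.mp hLp
    have hpair := key_pair L hsub hcond
    ext x
    rw [mem_dominoes]
    constructor
    · rintro ⟨i, hi, hx⟩
      rw [Finset.mem_filter, Finset.mem_Icc] at hi
      obtain ⟨⟨h1i, him⟩, h2i⟩ := hi
      rcases hx with rfl | rfl
      · exact h2i
      · exact (hpair i h1i him).mp h2i
    · intro hx
      have hxr : 2 ≤ x ∧ x ≤ n := by
        have := hsub hx; rw [Finset.mem_Icc] at this; exact this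
      rcases Nat.even_or_odd x with he | ho
      · obtain ⟨i, hi⟩ := he
        have hxi : x = 2 * i := by omega
        refine ⟨i, ?_, Or.inl hxi⟩
        rw [Finset.mem_filter, Finset.mem_Icc]
        exact ⟨⟨by omega, by omega⟩, hxi ▸ hx⟩
      · obtain ⟨i, hi⟩ := ho
        have hxi : x = 2 * i + 1 := by omega
        refine ⟨i, ?_, Or.inr hxi⟩
        rw [Finset.mem_filter, Finset.mem_Icc]
        refine ⟨⟨by omega, by omega⟩, ?_⟩
        exact (hpair i (by omega) (by omega)).mpr (hxi ▸ hx)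
  -- right inverse
  · intro S hS
    rw [Finset.mem_powersetCard] at hS
    obtain ⟨hsub, _⟩ := hS
    ext i
    rw [Finset.mem_filter, double_mem_dominoes]
    constructor
    · rintro ⟨_, h⟩; exact h
    · intro h; exact ⟨hsub h, h⟩
end

section
/- Let e = 2 and λ = (a, 1^b) a hook partition of n. For any standard λ-tableau T and 1 < i < n: (1) if i, i+1, …, n all lie in the arm of T, then ψ_i v_T = 0; (2) if i lies in the leg of T and i+1 lies in the arm, then ψ_i v_T = v_U, where U is obtained from T by swapping the entries i and i+1 (and U is again standard). -/
open scoped BigOperators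

def swapSeq (r : ℕ) (i : ℕ → ZMod 2) : ℕ → ZMod 2 :=
  fun k => if k = r then i (r + 1) else if k = r + 1 then i r else i k

/-- The KLR (quiver Hecke) algebra relations of type `A₁⁽¹⁾` (quantum characteristic `e = 2`)
on `n` strands, with generators `y 1, …, y n`, `ψ 1, …, ψ (n-1)` and idempotents `e i`
indexed by residue sequences `i : ℕ → ZMod 2` (positions `1, …, n` are the relevant ones). -/
structure KLR (A : Type*) [Ring A] (n : ℕ) where
  y : ℕ → A
  ψ : ℕ → A
  e : (ℕ → ZMod 2) → A
  e_idem : ∀ i, e i * e i = e i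
  e_orth : ∀ i j, i ≠ j → e i * e j = 0
  y_e : ∀ r i, 1 ≤ r → r ≤ n → y r * e i = e i * y r
  psi_e : ∀ r i, 1 ≤ r → r + 1 ≤ n → ψ r * e i = e (swapSeq r i) * ψ r
  y_comm : ∀ r s, 1 ≤ r → r ≤ n → 1 ≤ s → s ≤ n → y r * y s = y s * y r
  y_psi_comm : ∀ r s, 1 ≤ r → r + 1 ≤ n → 1 ≤ s → s ≤ n → s ≠ r → s ≠ r + 1 →
    y s * ψ r = ψ r * y s
  y_psi_same : ∀ r i, 1 ≤ r → r + 1 ≤ n → i r = i (r + 1) →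
    y r * ψ r * e i = (ψ r * y (r + 1) - 1) * e i
  y_psi_diff : ∀ r i, 1 ≤ r → r + 1 ≤ n → i r ≠ i (r + 1) →
    y r * ψ r * e i = ψ r * y (r + 1) * e i
  y_psi_same' : ∀ r i, 1 ≤ r → r + 1 ≤ n → i r = i (r + 1) →
    y (r + 1) * ψ r * e i = (ψ r * y r + 1) * e i
  y_psi_diff' : ∀ r i, 1 ≤ r → r + 1 ≤ n → i r ≠ i (r + 1) →
    y (r + 1) * ψ r * e i = ψ r * y r * e i
  psi_comm : ∀ r s, 1 ≤ r → r + 1 ≤ n → 1 ≤ s → s + 1 ≤ n → r + 1 < s →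
    ψ s * ψ r = ψ r * ψ s
  psi_sq_same : ∀ r i, 1 ≤ r → r + 1 ≤ n → i r = i (r + 1) → ψ r * ψ r * e i = 0
  psi_sq_diff : ∀ r i, 1 ≤ r → r + 1 ≤ n → i r ≠ i (r + 1) →
    ψ r * ψ r * e i = -((y r - y (r + 1)) ^ 2) * e i
  braid_same : ∀ r i, 1 ≤ r → r + 2 ≤ n → (i r = i (r + 1) ∨ i (r + 1) = i (r + 2)) →
    ψ r * ψ (r + 1) * ψ r * e i = ψ (r + 1) * ψ r * ψ (r + 1) * e i
  braid_diff : ∀ r i, 1 ≤ r → r + 2 ≤ n → i r ≠ i (r + 1) → i (r + 1) ≠ i (r + 2) →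
    ψ r * ψ (r + 1) * ψ r * e i =
      (ψ (r + 1) * ψ r * ψ (r + 1) + y r - 2 * y (r + 1) + y (r + 2)) * e i

variable {A : Type*} [Ring A] {n : ℕ}

/-- `Ψ j = ψ j * ψ (j+1) * ψ (j-1) * ψ j`. -/
def PsiBig (K : KLR A n) (j : ℕ) : A := K.ψ j * K.ψ (j + 1) * K.ψ (j - 1) * K.ψ j

/-- `Ψ↓(x,y) = Ψ x * Ψ (x-2) * ⋯ * Ψ y` (the empty product `1` if `x < y`). -/
def chainD (K : KLR A n) (x y : ℕ) : A :=
  ((List.range ((x + 2 - y) / 2)).map fun k => PsiBig K (x - 2 * k)).prod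

/-- `Ψ↑(x,y) = Ψ x * Ψ (x+2) * ⋯ * Ψ y` (the empty product `1` if `y < x`). -/
def chainU (K : KLR A n) (x y : ℕ) : A :=
  ((List.range ((y + 2 - x) / 2)).map fun k => PsiBig K (x + 2 * k)).prod

/-- `ψ_w` along a word `l` of indices. -/
def psiWord (K : KLR A n) (l : List ℕ) : A := (l.map K.ψ).prod

/-- `ψ x * ψ (x+1) * ⋯ * ψ y`. -/
def ascWord (K : KLR A n) (x y : ℕ) : A :=
  psiWord K ((List.range (y + 1 - x)).map fun t => x + t)

/-- The residue sequence `i_λ` of the initial tableau of the hook `(a, 1^b)` at `e = 2`. -/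
def iLamGen (b : ℕ) : ℕ → ZMod 2 :=
  fun k => if k ≤ b + 1 then (k : ZMod 2) + 1 else (k : ZMod 2) + (b : ZMod 2) + 1

/-- `normProd K base [j₁, …, j_d] = Ψ↓(j₁, base) * Ψ↓(j₂, base+2) * ⋯ * Ψ↓(j_d, base+2(d-1))`. -/
def normProd (K : KLR A n) : ℕ → List ℕ → A
  | _, [] => 1
  | base, j :: rest => chainD K j base * normProd K (base + 2) rest

/-- Valid normal-form data `[j₁ < j₂ < ⋯ < j_d]` for a domino tableau of the hook `(a,1^b)`,
`n = a + b`: all `jᵢ` odd, `b + 3 - 2d + 2i ≤ jᵢ₊₁ ≤ n - 2` (written without truncated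
subtraction). -/
def NormOK (n b : ℕ) (p : List ℕ) : Prop :=
  2 * p.length ≤ b ∧ List.Chain' (· < ·) p ∧
    ∀ i, (h : i < p.length) → Odd (p.get ⟨i, h⟩) ∧
      b + 3 + 2 * i ≤ p.get ⟨i, h⟩ + 2 * p.length ∧ p.get ⟨i, h⟩ + 2 ≤ n

/-- The number `r(T)` of `Ψ` factors in the normal form. -/
def rOf (b : ℕ) (p : List ℕ) : ℕ :=
  ∑ i ∈ Finset.range p.length, (p.getD i 0 + 2 * p.length - (b + 1 + 2 * i)) / 2

/-- `[x, x-1, …, y]` (empty if `x < y`). -/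
def descList (x y : ℕ) : List ℕ := (List.range (x + 1 - y)).map fun t => x - t

/-- The canonical reduced word of the permutation `w_T` for the standard hook tableau with
leg-entry set `L = {l₁ < ⋯ < l_b}`: the concatenation of the descending runs
`[l_k - 1, l_k - 2, …, k + 1]` for `k = 1, …, b`. -/
def tabWord (L : Finset ℕ) : List ℕ :=
  (List.range L.card).flatMap fun k => descList ((L.sort (· ≤ ·)).getD k 0 - 1) (k + 2)

/-- Coxeter length as number of inversions in `{1, …, n}`. -/
def invLen (n : ℕ) (w : Equiv.Perm ℕ) : ℕ :=
  (((Finset.Icc 1 n) ×ˢ (Finset.Icc 1 n)).filter fun p => p.1 < p.2 ∧ w p.2 < w p.1).card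


/-- `u` fixes `0` and everything above `n`. -/
def FixOut (n : ℕ) (u : Equiv.Perm ℕ) : Prop := ∀ m, m = 0 ∨ n < m → u m = m

lemma fixOut_range {u : Equiv.Perm ℕ} (hu : FixOut n u) {m : ℕ} (h1 : 1 ≤ m) (h2 : m ≤ n) :
    1 ≤ u m ∧ u m ≤ n := by
  constructor
  · rcases Nat.eq_zero_or_pos (u m) with h | h
    · have h0 : u m = u 0 := by rw [hu 0 (Or.inl rfl), h]
      have := u.injective h0
      omega
    · exact h
  · by_contra hc
    push_neg at hc
    have h0 : u (u m) = u m := hu (u m) (Or.inr hc)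
    have h1 : u m = u (u m) := h0.symm
    have := u.injective h1
    omega

lemma fixOut_symm {u : Equiv.Perm ℕ} (hu : FixOut n u) : FixOut n u.symm := by
  intro m hm
  have := hu m hm
  exact (Equiv.symm_apply_eq u).2 this.symm

lemma fixOut_one : FixOut n (1 : Equiv.Perm ℕ) := fun m _ => rfl

lemma fixOut_swap_mul {u : Equiv.Perm ℕ} {r : ℕ} (hr : 1 ≤ r) (hrn : r + 1 ≤ n)
    (hu : FixOut n u) : FixOut n (Equiv.swap r (r + 1) * u) := by
  intro m hm
  rw [Equiv.Perm.mul_apply, hu m hm]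
  apply Equiv.swap_apply_of_ne_of_ne <;> omega

lemma symm_swap_mul (u : Equiv.Perm ℕ) (r x : ℕ) :
    (Equiv.swap r (r + 1) * u).symm x = u.symm (Equiv.swap r (r + 1) x) := by
  rw [← Equiv.Perm.inv_def, mul_inv_rev, Equiv.swap_inv, Equiv.Perm.mul_apply]
  rfl

lemma swap_mul_swap_mul (u : Equiv.Perm ℕ) (r : ℕ) :
    Equiv.swap r (r + 1) * (Equiv.swap r (r + 1) * u) = u := by
  rw [← mul_assoc, Equiv.swap_mul_self, one_mul]

lemma swap_adj_lt (r x y : ℕ) (hne : x ≠ y) (h1 : ¬(x = r ∧ y = r + 1))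
    (h2 : ¬(x = r + 1 ∧ y = r)) :
    (Equiv.swap r (r + 1) x < Equiv.swap r (r + 1) y) ↔ x < y := by
  simp only [Equiv.swap_apply_def]
  split_ifs <;> omega

lemma swap_adj_comm {r s : ℕ} (h : r + 1 < s) :
    Equiv.swap r (r + 1) * Equiv.swap s (s + 1) = Equiv.swap s (s + 1) * Equiv.swap r (r + 1) := by
  ext x
  simp only [Equiv.Perm.mul_apply, Equiv.swap_apply_def]
  split_ifs <;> omega

lemma invLen_one : invLen n (1 : Equiv.Perm ℕ) = 0 := by
  rw [invLen, Finset.card_eq_zero, Finset.filter_eq_empty_iff]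
  intro x _
  simp only [Equiv.Perm.one_apply]
  omega

lemma invLen_swap_mul {w : Equiv.Perm ℕ} (hw : FixOut n w) (r : ℕ) (hr : 1 ≤ r)
    (hrn : r + 1 ≤ n) (h : w.symm r < w.symm (r + 1)) :
    invLen n (Equiv.swap r (r + 1) * w) = invLen n w + 1 := by
  have ha : w (w.symm r) = r := w.apply_symm_apply r
  have hc : w (w.symm (r + 1)) = r + 1 := w.apply_symm_apply (r + 1)
  have har := fixOut_range (fixOut_symm hw) (show 1 ≤ r from hr) (by omega)
  have hcr := fixOut_range (fixOut_symm hw) (show 1 ≤ r + 1 by omega) hrn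
  have hset : (((Finset.Icc 1 n) ×ˢ (Finset.Icc 1 n)).filter fun p =>
        p.1 < p.2 ∧ (Equiv.swap r (r + 1) * w) p.2 < (Equiv.swap r (r + 1) * w) p.1)
      = insert (w.symm r, w.symm (r + 1))
        (((Finset.Icc 1 n) ×ˢ (Finset.Icc 1 n)).filter fun p =>
          p.1 < p.2 ∧ w p.2 < w p.1) := by
    apply Finset.ext
    rintro ⟨p, q⟩
    rw [Finset.mem_filter, Finset.mem_insert, Finset.mem_filter]
    simp only [Finset.mem_filter, Finset.mem_insert, Finset.mem_product, Finset.mem_Icc,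
      Equiv.Perm.mul_apply, Prod.mk.injEq]
    constructor
    · rintro ⟨⟨hp, hq⟩, hpq, hlt⟩
      by_cases he : p = w.symm r ∧ q = w.symm (r + 1)
      · exact Or.inl he
      · refine Or.inr ⟨⟨hp, hq⟩, hpq, ?_⟩
        rw [swap_adj_lt r (w q) (w p) ?_ ?_ ?_] at hlt
        · exact hlt
        · intro hh; exact absurd (w.injective hh) (by omega)
        · rintro ⟨e1, e2⟩
          have : q = w.symm r := by rw [← e1, Equiv.symm_apply_apply]
          have : p = w.symm (r + 1) := by rw [← e2, Equiv.symm_apply_apply]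
          omega
        · rintro ⟨e1, e2⟩
          have h1 : q = w.symm (r + 1) := by rw [← e1, Equiv.symm_apply_apply]
          have h2 : p = w.symm r := by rw [← e2, Equiv.symm_apply_apply]
          exact he ⟨h2, h1⟩
    · rintro (⟨hp', hq'⟩ | ⟨⟨hp, hq⟩, hpq, hlt⟩)
      · subst hp'; subst hq'
        refine ⟨⟨har, hcr⟩, h, ?_⟩
        rw [ha, hc, Equiv.swap_apply_right, Equiv.swap_apply_left]
        omega
      · refine ⟨⟨hp, hq⟩, hpq, ?_⟩
        rw [swap_adj_lt r (w q) (w p) ?_ ?_ ?_]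
        · exact hlt
        · intro hh; exact absurd (w.injective hh) (by omega)
        · rintro ⟨e1, e2⟩
          have h1 : q = w.symm r := by rw [← e1, Equiv.symm_apply_apply]
          have h2 : p = w.symm (r + 1) := by rw [← e2, Equiv.symm_apply_apply]
          omega
        · rintro ⟨e1, e2⟩
          omega
  have hmem : (w.symm r, w.symm (r + 1)) ∉
      (((Finset.Icc 1 n) ×ˢ (Finset.Icc 1 n)).filter fun p =>
        p.1 < p.2 ∧ w p.2 < w p.1) := by
    simp only [Finset.mem_filter]
    rintro ⟨-, -, hlt⟩
    rw [ha, hc] at hlt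
    omega
  rw [invLen, invLen]
  rw [hset, Finset.card_insert_of_notMem hmem]

lemma invLen_swap_mul' {w : Equiv.Perm ℕ} (hw : FixOut n w) (r : ℕ) (hr : 1 ≤ r)
    (hrn : r + 1 ≤ n) (h : w.symm (r + 1) < w.symm r) :
    invLen n w = invLen n (Equiv.swap r (r + 1) * w) + 1 := by
  have h2 : (Equiv.swap r (r + 1) * w).symm r < (Equiv.swap r (r + 1) * w).symm (r + 1) := by
    rw [symm_swap_mul, symm_swap_mul, Equiv.swap_apply_left, Equiv.swap_apply_right]
    exact h
  have := invLen_swap_mul (fixOut_swap_mul hr hrn hw) r hr hrn h2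
  rw [swap_mul_swap_mul] at this
  omega

lemma mono_id (g : Equiv.Perm ℕ) (hg : FixOut n g)
    (h : ∀ r, 1 ≤ r → r + 1 ≤ n → g r < g (r + 1)) : ∀ m, g m = m := by
  have hstep : ∀ q p, 1 ≤ p → p < q → q ≤ n → g p < g q := by
    intro q
    induction q with
    | zero => intro p _ h2 _; omega
    | succ q ih =>
      intro p h1 h2 h3
      rcases Nat.lt_or_ge p q with hlt | hge
      · exact lt_trans (ih p h1 hlt (by omega)) (h q (by omega) h3)
      · have hpq : p = q := by omega
        subst hpq
        exact h p h1 h3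
  have hlow : ∀ m, 1 ≤ m → m ≤ n → m ≤ g m := by
    intro m
    induction m with
    | zero => intro h1 _; omega
    | succ m ih =>
      intro h1 h2
      rcases Nat.eq_zero_or_pos m with h0 | h0
      · subst h0
        exact (fixOut_range hg le_rfl h2).1
      · have hgm := ih h0 (by omega)
        have := hstep (m + 1) m h0 (by omega) h2
        omega
  have hup : ∀ d m, 1 ≤ m → m ≤ n → n - m = d → g m ≤ m := by
    intro d
    induction d with
    | zero =>
      intro m h1 h2 h3
      have hm : m = n := by omega
      subst hm
      exact (fixOut_range hg h1 le_rfl).2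
    | succ d ih =>
      intro m h1 h2 h3
      have hlt := hstep (m + 1) m h1 (by omega) (by omega)
      have := ih (m + 1) (by omega) (by omega) (by omega)
      omega
  intro m
  by_cases hm0 : m = 0 ∨ n < m
  · exact hg m hm0
  · push_neg at hm0
    have h1 : 1 ≤ m := by omega
    have h2 : m ≤ n := hm0.2
    have := hup (n - m) m h1 h2 rfl
    have := hlow m h1 h2
    omega

lemma fixOut_prod : ∀ l : List ℕ, (∀ r ∈ l, 1 ≤ r ∧ r + 1 ≤ n) →
    FixOut n ((l.map fun r => Equiv.swap r (r + 1)).prod) := by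
  intro l
  induction l with
  | nil => intro _; simpa using (fixOut_one (n := n))
  | cons r t ih =>
    intro hv
    have hr := hv r List.mem_cons_self
    rw [List.map_cons, List.prod_cons]
    exact fixOut_swap_mul hr.1 hr.2 (ih fun x hx => hv x (List.mem_cons_of_mem _ hx))

lemma invLen_le_length : ∀ l : List ℕ, (∀ r ∈ l, 1 ≤ r ∧ r + 1 ≤ n) →
    invLen n ((l.map fun r => Equiv.swap r (r + 1)).prod) ≤ l.length := by
  intro l
  induction l with
  | nil => simp [invLen_one]
  | cons r t ih =>
    intro hv
    have hr := hv r List.mem_cons_self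
    have ht := fun x hx => hv x (List.mem_cons_of_mem _ hx)
    have hfv := fixOut_prod t ht
    rw [List.map_cons, List.prod_cons]
    set v := (t.map fun r => Equiv.swap r (r + 1)).prod with hv'
    have hiht := ih ht
    rcases lt_trichotomy (v.symm r) (v.symm (r + 1)) with hlt | heq | hgt
    · rw [invLen_swap_mul hfv r hr.1 hr.2 hlt]
      simp only [List.length_cons]
      omega
    · exact absurd (v.symm.injective heq) (by omega)
    · have := invLen_swap_mul' hfv r hr.1 hr.2 hgt
      simp only [List.length_cons]
      omega

lemma desc_of_word {u : Equiv.Perm ℕ} (hu : FixOut n u) {r : ℕ} (hr : 1 ≤ r)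
    (hrn : r + 1 ≤ n) {t : List ℕ} (ht : ∀ x ∈ t, 1 ≤ x ∧ x + 1 ≤ n)
    (hprod : (t.map fun x => Equiv.swap x (x + 1)).prod = Equiv.swap r (r + 1) * u)
    (hNlen : invLen n u = t.length + 1) :
    u.symm (r + 1) < u.symm r ∧ invLen n (Equiv.swap r (r + 1) * u) + 1 = invLen n u := by
  have hle := invLen_le_length t ht
  rw [hprod] at hle
  rcases lt_trichotomy (u.symm r) (u.symm (r + 1)) with hlt | heq | hgt
  · rw [invLen_swap_mul hu r hr hrn hlt] at hle
    omega
  · exact absurd (u.symm.injective heq) (by omega)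
  · have := invLen_swap_mul' hu r hr hrn hgt
    exact ⟨hgt, by omega⟩

lemma exists_reduced : ∀ N : ℕ, ∀ w : Equiv.Perm ℕ, FixOut n w → invLen n w = N →
    ∃ l : List ℕ, (∀ r ∈ l, 1 ≤ r ∧ r + 1 ≤ n) ∧
      (l.map fun r => Equiv.swap r (r + 1)).prod = w ∧ l.length = N := by
  intro N
  induction N using Nat.strong_induction_on with
  | _ N IH =>
    intro w hw hN
    by_cases hd : ∃ r, 1 ≤ r ∧ r + 1 ≤ n ∧ w.symm (r + 1) < w.symm r
    · obtain ⟨r, hr1, hrn, hrd⟩ := hd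
      have hlen := invLen_swap_mul' hw r hr1 hrn hrd
      obtain ⟨t, ht1, ht2, ht3⟩ := IH (invLen n (Equiv.swap r (r + 1) * w)) (by omega) _
        (fixOut_swap_mul hr1 hrn hw) rfl
      refine ⟨r :: t, ?_, ?_, ?_⟩
      · intro x hx
        rcases List.mem_cons.1 hx with h | h
        · subst h; exact ⟨hr1, hrn⟩
        · exact ht1 x h
      · rw [List.map_cons, List.prod_cons, ht2, swap_mul_swap_mul]
      · simp only [List.length_cons]; omega
    · push_neg at hd
      have hid : ∀ m, w.symm m = m := by
        apply mono_id w.symm (fixOut_symm hw)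
        intro r h1 h2
        exact lt_of_le_of_ne (hd r h1 h2) fun he => by
          have := w.symm.injective he; omega
      have hw1 : w = 1 := by
        ext x
        have h := w.apply_symm_apply x
        rw [hid x] at h
        simpa using h
      subst hw1
      exact ⟨[], by simp, by simp, by rw [invLen_one] at hN; simpa using hN⟩

def IncOn (u : Equiv.Perm ℕ) (lo hi : ℕ) : Prop :=
  ∀ p q, lo ≤ p → p < q → q ≤ hi → u p < u q

def StdT (n b : ℕ) (u : Equiv.Perm ℕ) : Prop :=
  FixOut n u ∧ u 1 = 1 ∧ IncOn u 2 (b + 1) ∧ IncOn u (b + 2) n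

def DefT (n b i : ℕ) (u : Equiv.Perm ℕ) : Prop :=
  FixOut n u ∧ u 1 = 1 ∧ b + 2 ≤ i ∧ i + 1 ≤ n ∧ u i = i + 1 ∧ u (i + 1) = i ∧
    (∀ m, i + 2 ≤ m → m ≤ n → u m = m) ∧ IncOn u 2 (b + 1) ∧ IncOn u (b + 2) (i - 1)

def Cc (n b : ℕ) (u : Equiv.Perm ℕ) : Prop := StdT n b u ∨ ∃ i, DefT n b i u

lemma cc_fixOut {b : ℕ} {u : Equiv.Perm ℕ} (h : Cc n b u) : FixOut n u := by
  rcases h with h | ⟨i, h⟩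
  · exact h.1
  · exact h.1

lemma eq_symm_of_apply {u : Equiv.Perm ℕ} {p v : ℕ} (h : u p = v) : p = u.symm v := by
  rw [← h, Equiv.symm_apply_apply]

lemma defT_symm_facts {b i : ℕ} {u : Equiv.Perm ℕ} (h : DefT n b i u) :
    u.symm i = i + 1 ∧ u.symm (i + 1) = i ∧ ∀ m, i + 2 ≤ m → m ≤ n → u.symm m = m := by
  obtain ⟨hfix, h1, hbi, hin, hui, hui1, hid, hleg, harm⟩ := h
  exact ⟨(eq_symm_of_apply hui1).symm, (eq_symm_of_apply hui).symm,
    fun m hm1 hm2 => (eq_symm_of_apply (hid m hm1 hm2)).symm⟩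

lemma defT_small_pos {b i : ℕ} {u : Equiv.Perm ℕ} (h : DefT n b i u) {m : ℕ}
    (hm : 1 ≤ m) (hm2 : m ≤ i - 1) : 1 ≤ u.symm m ∧ u.symm m ≤ i - 1 := by
  obtain ⟨hfix, h1, hbi, hin, hui, hui1, hid, hleg, harm⟩ := h
  have hr := fixOut_range (fixOut_symm hfix) hm (by omega)
  set p := u.symm m with hp
  have hup : u p = m := u.apply_symm_apply m
  refine ⟨hr.1, ?_⟩
  by_contra hc
  push_neg at hc
  have hpi : i ≤ p := by omega
  rcases Nat.lt_or_ge p (i + 2) with hlt | hge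
  · rcases (by omega : p = i ∨ p = i + 1) with he | he
    · rw [he, hui] at hup; omega
    · rw [he, hui1] at hup; omega
  · have := hid p hge hr.2
    omega

lemma defT_small_val {b i : ℕ} {u : Equiv.Perm ℕ} (h : DefT n b i u) {p : ℕ}
    (hp : 1 ≤ p) (hp2 : p ≤ i - 1) : 1 ≤ u p ∧ u p ≤ i - 1 := by
  obtain ⟨hs1, hs2, hs3⟩ := defT_symm_facts h
  obtain ⟨hfix, h1, hbi, hin, hui, hui1, hid, hleg, harm⟩ := h
  have hr := fixOut_range hfix hp (by omega)
  refine ⟨hr.1, ?_⟩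
  by_contra hc
  push_neg at hc
  have hvi : i ≤ u p := by omega
  rcases Nat.lt_or_ge (u p) (i + 2) with hlt | hge
  · rcases (by omega : u p = i ∨ u p = i + 1) with he | he
    · have := eq_symm_of_apply he
      rw [hs1] at this
      omega
    · have := eq_symm_of_apply he
      rw [hs2] at this
      omega
  · have := hs3 (u p) hge hr.2
    have : p = u p := by rw [← this]; exact eq_symm_of_apply rfl
    omega

lemma incOn_swap {u : Equiv.Perm ℕ} {lo hi r : ℕ} (hinc : IncOn u lo hi)
    (hno : ∀ p q, lo ≤ p → p ≤ hi → lo ≤ q → q ≤ hi → ¬(u p = r ∧ u q = r + 1)) :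
    IncOn (Equiv.swap r (r + 1) * u) lo hi := by
  intro p q hp hpq hq
  simp only [Equiv.Perm.mul_apply]
  have hlt := hinc p q hp hpq hq
  rw [swap_adj_lt r (u p) (u q) (by omega) (hno p q hp (by omega) (by omega) hq)
    (by rintro ⟨e1, e2⟩; omega)]
  exact hlt

lemma std_desc {b : ℕ} {u : Equiv.Perm ℕ} (h : StdT n b u) {r : ℕ} (hr : 1 ≤ r)
    (hrn : r + 1 ≤ n) (hd : u.symm (r + 1) < u.symm r) :
    b + 2 ≤ u.symm r ∧ u.symm r ≤ n ∧ 2 ≤ u.symm (r + 1) ∧ u.symm (r + 1) ≤ b + 1 := by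
  obtain ⟨hfix, h1, hleg, harm⟩ := h
  have hpr := fixOut_range (fixOut_symm hfix) (show 1 ≤ r from hr) (by omega)
  have hqr := fixOut_range (fixOut_symm hfix) (show 1 ≤ r + 1 by omega) hrn
  set p := u.symm r with hp
  set q := u.symm (r + 1) with hq
  have hup : u p = r := u.apply_symm_apply r
  have huq : u q = r + 1 := u.apply_symm_apply (r + 1)
  have hq1 : q ≠ 1 := by
    intro he; rw [he, h1] at huq; omega
  have hp1 : p ≠ 1 := by
    intro he; rw [he, h1] at hup; omega
  by_cases hpb : p ≤ b + 1
  · by_cases hqb : q ≤ b + 1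
    · have := hleg q p (by omega) hd hpb
      omega
    · omega
  · by_cases hqb : q ≤ b + 1
    · exact ⟨by omega, hpr.2, by omega, hqb⟩
    · have := harm q p (by omega) hd hpr.2
      omega

lemma def_desc {b i : ℕ} {u : Equiv.Perm ℕ} (h : DefT n b i u) {r : ℕ} (hr : 1 ≤ r)
    (hrn : r + 1 ≤ n) (hd : u.symm (r + 1) < u.symm r) :
    r = i ∨ (r + 2 ≤ i ∧ b + 2 ≤ u.symm r ∧ u.symm r ≤ i - 1 ∧
      2 ≤ u.symm (r + 1) ∧ u.symm (r + 1) ≤ b + 1) := by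
  obtain ⟨hs1, hs2, hs3⟩ := defT_symm_facts h
  have hbi : b + 2 ≤ i := h.2.2.1
  have hin : i + 1 ≤ n := h.2.2.2.1
  by_cases h1 : r = i
  · exact Or.inl h1
  by_cases h2 : i + 2 ≤ r
  · rw [hs3 r h2 (by omega), hs3 (r + 1) (by omega) hrn] at hd
    omega
  by_cases h4 : r = i + 1
  · subst h4
    rw [hs2, hs3 (i + 2) le_rfl (by omega : i + 2 ≤ n)] at hd
    omega
  by_cases h3 : r + 1 = i
  · rw [h3, hs1] at hd
    have := defT_small_pos h (show 1 ≤ r from hr) (by omega)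
    omega
  -- now r + 2 ≤ i
  have hri : r + 2 ≤ i := by omega
  have hps := defT_small_pos h (show 1 ≤ r from hr) (by omega)
  have hqs := defT_small_pos h (show 1 ≤ r + 1 by omega) (by omega)
  set p := u.symm r with hp
  set q := u.symm (r + 1) with hq
  have hup : u p = r := u.apply_symm_apply r
  have huq : u q = r + 1 := u.apply_symm_apply (r + 1)
  have hq1 : q ≠ 1 := by
    intro he; rw [he, h.2.1] at huq; omega
  have hp1 : p ≠ 1 := by
    intro he; rw [he, h.2.1] at hup; omega
  have hleg := h.2.2.2.2.2.2.2.1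
  have harm := h.2.2.2.2.2.2.2.2
  by_cases hpb : p ≤ b + 1
  · by_cases hqb : q ≤ b + 1
    · have := hleg q p (by omega) hd hpb
      omega
    · omega
  · by_cases hqb : q ≤ b + 1
    · exact Or.inr ⟨hri, by omega, hps.2, by omega, hqb⟩
    · have := harm q p (by omega) hd hps.2
      omega

lemma cc_noAdj {b : ℕ} {u : Equiv.Perm ℕ} (h : Cc n b u) {r : ℕ} (hr : 1 ≤ r)
    (hrn : r + 2 ≤ n) (h1 : u.symm (r + 1) < u.symm r)
    (h2 : u.symm (r + 2) < u.symm (r + 1)) : False := by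
  have h2' : u.symm (r + 1 + 1) < u.symm (r + 1) := by
    have : r + 1 + 1 = r + 2 := by omega
    rw [this]; exact h2
  rcases h with hstd | ⟨i, hdef⟩
  · have d1 := std_desc hstd hr (by omega) h1
    have d2 := std_desc hstd (by omega : 1 ≤ r + 1) (by omega : r + 1 + 1 ≤ n) h2'
    omega
  · obtain ⟨hs1, hs2, hs3⟩ := defT_symm_facts hdef
    have hbi : b + 2 ≤ i := hdef.2.2.1
    have d1 := def_desc hdef hr (by omega) h1
    have d2 := def_desc hdef (by omega : 1 ≤ r + 1) (by omega : r + 1 + 1 ≤ n) h2'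
    rcases d1 with he1 | ⟨hri1, _, _, _, hq2⟩
    · rcases d2 with he2 | ⟨hri2, _, _, _, _⟩
      · omega
      · omega
    · rcases d2 with he2 | ⟨hri2, hb2, _, _, _⟩
      · rw [he2, hs1] at hq2
        omega
      · omega

lemma cc_closure {b : ℕ} {u : Equiv.Perm ℕ} (h : Cc n b u) {r : ℕ} (hr : 1 ≤ r)
    (hrn : r + 1 ≤ n) (hd : u.symm (r + 1) < u.symm r) :
    Cc n b (Equiv.swap r (r + 1) * u) := by
  rcases h with hstd | ⟨i, hdef⟩
  · obtain ⟨hp1, hp2, hq1, hq2⟩ := std_desc hstd hr hrn hd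
    obtain ⟨hfix, h1, hleg, harm⟩ := hstd
    have hr2 : 2 ≤ r := by
      by_contra hc
      have hre : r = 1 := by omega
      have h1' : u.symm 1 = 1 := (eq_symm_of_apply h1).symm
      rw [hre, h1'] at hp1
      omega
    refine Or.inl ⟨fixOut_swap_mul hr hrn hfix, ?_, ?_, ?_⟩
    · rw [Equiv.Perm.mul_apply, h1]
      exact Equiv.swap_apply_of_ne_of_ne (by omega) (by omega)
    · apply incOn_swap hleg
      intro p q hp hphi hq hqhi
      rintro ⟨e1, e2⟩
      have h' := eq_symm_of_apply e1
      omega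
    · apply incOn_swap harm
      intro p q hp hphi hq hqhi
      rintro ⟨e1, e2⟩
      have h' := eq_symm_of_apply e2
      omega
  · obtain ⟨hs1, hs2, hs3⟩ := defT_symm_facts hdef
    have hbi : b + 2 ≤ i := hdef.2.2.1
    have hin : i + 1 ≤ n := hdef.2.2.2.1
    rcases def_desc hdef hr hrn hd with rfl | ⟨hri, hp1, hp2, hq1, hq2⟩
    · -- r = i : result is standard
      have hfix := hdef.1
      have h1 := hdef.2.1
      have hui := hdef.2.2.2.2.1
      have hui1 := hdef.2.2.2.2.2.1
      have hid := hdef.2.2.2.2.2.2.1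
      have hleg := hdef.2.2.2.2.2.2.2.1
      have harm := hdef.2.2.2.2.2.2.2.2
      have hbig : ∀ m, r ≤ m → m ≤ n → (Equiv.swap r (r + 1) * u) m = m := by
        intro m hm1 hm2
        rw [Equiv.Perm.mul_apply]
        rcases (by omega : m = r ∨ m = r + 1 ∨ r + 2 ≤ m) with he | he | he
        · rw [he, hui, Equiv.swap_apply_right]
        · rw [he, hui1, Equiv.swap_apply_left]
        · rw [hid m he hm2]
          exact Equiv.swap_apply_of_ne_of_ne (by omega) (by omega)
      refine Or.inl ⟨fixOut_swap_mul hr hrn hfix, ?_, ?_, ?_⟩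
      · rw [Equiv.Perm.mul_apply, h1]
        exact Equiv.swap_apply_of_ne_of_ne (by omega) (by omega)
      · apply incOn_swap hleg
        intro p q hp hphi hq hqhi
        rintro ⟨e1, e2⟩
        have h' := eq_symm_of_apply e1
        rw [hs1] at h'
        omega
      · intro p q hp hpq hq
        by_cases hq3 : q ≤ r - 1
        · have hpv := defT_small_val hdef (show 1 ≤ p by omega) (by omega)
          have hqv := defT_small_val hdef (show 1 ≤ q by omega) hq3
          have hep : (Equiv.swap r (r + 1) * u) p = u p := by
            rw [Equiv.Perm.mul_apply]
            exact Equiv.swap_apply_of_ne_of_ne (by omega) (by omega)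
          have heq2 : (Equiv.swap r (r + 1) * u) q = u q := by
            rw [Equiv.Perm.mul_apply]
            exact Equiv.swap_apply_of_ne_of_ne (by omega) (by omega)
          rw [hep, heq2]
          exact harm p q hp hpq hq3
        · have hq4 : r ≤ q := by omega
          rw [hbig q hq4 hq]
          by_cases hp3 : p ≤ r - 1
          · have hpv := defT_small_val hdef (show 1 ≤ p by omega) hp3
            have hep : (Equiv.swap r (r + 1) * u) p = u p := by
              rw [Equiv.Perm.mul_apply]
              exact Equiv.swap_apply_of_ne_of_ne (by omega) (by omega)
            rw [hep]
            omega
          · rw [hbig p (by omega) (by omega)]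
            exact hpq
    · -- r + 2 ≤ i : result is again defective at i
      have hr2 : 2 ≤ r := by
        by_contra hc
        have hre : r = 1 := by omega
        have h1' : u.symm 1 = 1 := (eq_symm_of_apply hdef.2.1).symm
        rw [hre, h1'] at hp1
        omega
      refine Or.inr ⟨i, fixOut_swap_mul hr hrn hdef.1, ?_, hbi, hin, ?_, ?_, ?_, ?_, ?_⟩
      · rw [Equiv.Perm.mul_apply, hdef.2.1]
        exact Equiv.swap_apply_of_ne_of_ne (by omega) (by omega)
      · rw [Equiv.Perm.mul_apply, hdef.2.2.2.2.1]
        exact Equiv.swap_apply_of_ne_of_ne (by omega) (by omega)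
      · rw [Equiv.Perm.mul_apply, hdef.2.2.2.2.2.1]
        exact Equiv.swap_apply_of_ne_of_ne (by omega) (by omega)
      · intro m hm1 hm2
        rw [Equiv.Perm.mul_apply, hdef.2.2.2.2.2.2.1 m hm1 hm2]
        exact Equiv.swap_apply_of_ne_of_ne (by omega) (by omega)
      · apply incOn_swap hdef.2.2.2.2.2.2.2.1
        intro p q hp hphi hq hqhi
        rintro ⟨e1, e2⟩
        have h' := eq_symm_of_apply e1
        omega
      · apply incOn_swap hdef.2.2.2.2.2.2.2.2
        intro p q hp hphi hq hqhi
        rintro ⟨e1, e2⟩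
        have h' := eq_symm_of_apply e2
        omega

lemma psiWord_nil (K : KLR A n) : psiWord K [] = 1 := by simp [psiWord]

lemma psiWord_cons (K : KLR A n) (r : ℕ) (l : List ℕ) :
    psiWord K (r :: l) = K.ψ r * psiWord K l := by simp [psiWord]

lemma psiWord_append (K : KLR A n) (l1 l2 : List ℕ) :
    psiWord K (l1 ++ l2) = psiWord K l1 * psiWord K l2 := by simp [psiWord]

lemma psiWord_welldef (K : KLR A n) (b : ℕ) :
    ∀ N : ℕ, ∀ u : Equiv.Perm ℕ, Cc n b u → invLen n u = N →
    ∀ l1 l2 : List ℕ, (∀ r ∈ l1, 1 ≤ r ∧ r + 1 ≤ n) → (∀ r ∈ l2, 1 ≤ r ∧ r + 1 ≤ n) →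
    (l1.map fun r => Equiv.swap r (r + 1)).prod = u →
    (l2.map fun r => Equiv.swap r (r + 1)).prod = u →
    l1.length = N → l2.length = N → psiWord K l1 = psiWord K l2 := by
  intro N
  induction N using Nat.strong_induction_on with
  | _ N IH =>
    intro u hu huN l1 l2 hv1 hv2 hp1 hp2 hlen1 hlen2
    match l1, l2 with
    | [], [] => rfl
    | [], s :: t2 => simp at hlen1 hlen2; omega
    | r :: t1, [] => simp at hlen1 hlen2; omega
    | r :: t1, s :: t2 =>
      simp only [List.length_cons] at hlen1 hlen2
      have hrb := hv1 r List.mem_cons_self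
      have hsb := hv2 s List.mem_cons_self
      have ht1 := fun x hx => hv1 x (List.mem_cons_of_mem _ hx)
      have ht2 := fun x hx => hv2 x (List.mem_cons_of_mem _ hx)
      rw [List.map_cons, List.prod_cons] at hp1 hp2
      have hpt1 : (t1.map fun x => Equiv.swap x (x + 1)).prod = Equiv.swap r (r + 1) * u := by
        rw [← hp1, swap_mul_swap_mul]
      have hpt2 : (t2.map fun x => Equiv.swap x (x + 1)).prod = Equiv.swap s (s + 1) * u := by
        rw [← hp2, swap_mul_swap_mul]
      have hfixu := cc_fixOut hu
      have hd1 := desc_of_word hfixu hrb.1 hrb.2 ht1 hpt1 (by omega)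
      have hd2 := desc_of_word hfixu hsb.1 hsb.2 ht2 hpt2 (by omega)
      by_cases hrs : r = s
      · subst hrs
        rw [psiWord_cons, psiWord_cons]
        have heq := IH t1.length (by omega) (Equiv.swap r (r + 1) * u)
          (cc_closure hu hrb.1 hrb.2 hd1.1) (by omega) t1 t2 ht1 ht2 hpt1 hpt2 rfl (by omega)
        rw [heq]
      · have hns : ¬ (s = r + 1) := by
          intro he
          subst he
          exact cc_noAdj hu hrb.1 hsb.2 hd1.1 hd2.1
        have hnr : ¬ (r = s + 1) := by
          intro he
          subst he
          exact cc_noAdj hu hsb.1 hrb.2 hd2.1 hd1.1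
        have key : ∀ r' s' (t1' t2' : List ℕ), 1 ≤ r' → r' + 1 ≤ n → 1 ≤ s' → s' + 1 ≤ n →
            (∀ x ∈ t1', 1 ≤ x ∧ x + 1 ≤ n) → (∀ x ∈ t2', 1 ≤ x ∧ x + 1 ≤ n) →
            (t1'.map fun x => Equiv.swap x (x + 1)).prod = Equiv.swap r' (r' + 1) * u →
            (t2'.map fun x => Equiv.swap x (x + 1)).prod = Equiv.swap s' (s' + 1) * u →
            t1'.length + 1 = N → t2'.length + 1 = N →
            u.symm (r' + 1) < u.symm r' → u.symm (s' + 1) < u.symm s' →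
            invLen n (Equiv.swap r' (r' + 1) * u) + 1 = N →
            invLen n (Equiv.swap s' (s' + 1) * u) + 1 = N →
            r' + 2 ≤ s' →
            psiWord K (r' :: t1') = psiWord K (s' :: t2') := by
          intro r' s' t1' t2' hr1 hrn hs1 hsn hvt1 hvt2 hq1 hq2 hl1 hl2 hdr hds hir his hlt
          have hcc1 := cc_closure hu hr1 hrn hdr
          have hcc2 := cc_closure hu hs1 hsn hds
          have hdsym : (Equiv.swap r' (r' + 1) * u).symm (s' + 1) <
              (Equiv.swap r' (r' + 1) * u).symm s' := by
            rw [symm_swap_mul, symm_swap_mul,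
              Equiv.swap_apply_of_ne_of_ne (by omega) (by omega),
              Equiv.swap_apply_of_ne_of_ne (by omega) (by omega)]
            exact hds
          have h12 := invLen_swap_mul' (fixOut_swap_mul hr1 hrn hfixu) s' hs1 hsn hdsym
          obtain ⟨t, htv, htp, htl⟩ := exists_reduced
            (invLen n (Equiv.swap s' (s' + 1) * (Equiv.swap r' (r' + 1) * u)))
            _ (fixOut_swap_mul hs1 hsn (fixOut_swap_mul hr1 hrn hfixu)) rfl
          have hcomm := swap_adj_comm (show r' + 1 < s' by omega)
          have e1 : psiWord K t1' = psiWord K (s' :: t) := by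
            apply IH t1'.length (by omega) (Equiv.swap r' (r' + 1) * u) hcc1 (by omega)
              t1' (s' :: t) hvt1 ?_ hq1 ?_ rfl ?_
            · intro x hx
              rcases List.mem_cons.1 hx with h | h
              · subst h; exact ⟨hs1, hsn⟩
              · exact htv x h
            · rw [List.map_cons, List.prod_cons, htp, swap_mul_swap_mul]
            · simp only [List.length_cons]; omega
          have e2 : psiWord K t2' = psiWord K (r' :: t) := by
            apply IH t2'.length (by omega) (Equiv.swap s' (s' + 1) * u) hcc2 (by omega)
              t2' (r' :: t) hvt2 ?_ hq2 ?_ rfl ?_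
            · intro x hx
              rcases List.mem_cons.1 hx with h | h
              · subst h; exact ⟨hr1, hrn⟩
              · exact htv x h
            · rw [List.map_cons, List.prod_cons, htp]
              calc Equiv.swap r' (r' + 1) * (Equiv.swap s' (s' + 1) * (Equiv.swap r' (r' + 1) * u))
                  = (Equiv.swap r' (r' + 1) * Equiv.swap s' (s' + 1)) * (Equiv.swap r' (r' + 1) * u) := by
                    rw [mul_assoc]
                _ = (Equiv.swap s' (s' + 1) * Equiv.swap r' (r' + 1)) * (Equiv.swap r' (r' + 1) * u) := by
                    rw [hcomm]
                _ = Equiv.swap s' (s' + 1) * (Equiv.swap r' (r' + 1) * (Equiv.swap r' (r' + 1) * u)) := by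
                    rw [mul_assoc]
                _ = Equiv.swap s' (s' + 1) * u := by rw [swap_mul_swap_mul]
            · simp only [List.length_cons]; omega
          rw [psiWord_cons, psiWord_cons, e1, e2, psiWord_cons, psiWord_cons,
            ← mul_assoc, ← mul_assoc, K.psi_comm r' s' hr1 hrn hs1 hsn (by omega)]
        rcases (by omega : r + 2 ≤ s ∨ s + 2 ≤ r) with hc | hc
        · exact key r s t1 t2 hrb.1 hrb.2 hsb.1 hsb.2 ht1 ht2 hpt1 hpt2 (by omega) (by omega)
            hd1.1 hd2.1 (by omega) (by omega) hc
        · exact (key s r t2 t1 hsb.1 hsb.2 hrb.1 hrb.2 ht2 ht1 hpt2 hpt1 (by omega) (by omega)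
            hd2.1 hd1.1 (by omega) (by omega) hc).symm

/-- `e = 2`, `λ = (a, 1^b)` a hook partition of `n = a + b`.  The Specht
module is generated by `z` subject to `y_k z = 0`, `e(i) z = δ_{i,i_λ} z`, `ψ_j z = 0` for
`j ≠ b + 1` and `ψ_1 ⋯ ψ_{b+1} z = 0`.  A standard `λ`-tableau `T` is encoded by the
permutation `w = w_T` (with `w_T T_λ = T`, fixing everything outside `{1, …, n}`, `w 1 = 1`,
increasing on leg positions `{2, …, b+1}` and on arm positions `{b+2, …, n}`), and
`v_T = ψ_{w_T} z` along any reduced word `l` for `w_T`.  Then for `1 < i < n`: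
(1) if `i, i+1, …, n` all lie in the arm of `T` then `ψ_i v_T = 0`; and
(2) if `i` lies in the leg and `i + 1` in the arm, then `ψ_i v_T = v_U` where `U = s_i T`
(along any reduced word `l'` for `w_U = s_i w_T`), and `U` is again standard. -/
theorem specht_hook_psi_on_basis {M : Type*} [AddCommGroup M] [Module A M]
    (a b : ℕ) (hn : n = a + b) (ha : 1 ≤ a) (hb : 1 ≤ b)
    (K : KLR A n) (z : M)
    (hy : ∀ k, 1 ≤ k → k ≤ n → K.y k • z = 0)
    (he1 : K.e (iLamGen b) • z = z)
    (he2 : ∀ i, i ≠ iLamGen b → K.e i • z = 0)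
    (hpsiz : ∀ j, 1 ≤ j → j + 1 ≤ n → j ≠ b + 1 → K.ψ j • z = 0)
    (hgar : ascWord K 1 (b + 1) • z = 0)
    (w : Equiv.Perm ℕ)
    (hwfix : ∀ m, m = 0 ∨ n < m → w m = m) (hw1 : w 1 = 1)
    (hleg : ∀ p q, 2 ≤ p → p < q → q ≤ b + 1 → w p < w q)
    (harm : ∀ p q, b + 2 ≤ p → p < q → q ≤ n → w p < w q)
    (l : List ℕ) (hl : ∀ r ∈ l, 1 ≤ r ∧ r + 1 ≤ n)
    (hlw : (l.map fun r => Equiv.swap r (r + 1)).prod = w)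
    (hlred : l.length = invLen n w)
    (i : ℕ) (hi1 : 1 < i) (hin : i < n) :
    ((∀ m, i ≤ m → m ≤ n → b + 2 ≤ w.symm m) → K.ψ i • (psiWord K l • z) = 0) ∧
    (2 ≤ w.symm i → w.symm i ≤ b + 1 → b + 2 ≤ w.symm (i + 1) →
      (∀ l' : List ℕ, (∀ r ∈ l', 1 ≤ r ∧ r + 1 ≤ n) →
          (l'.map fun r => Equiv.swap r (r + 1)).prod = Equiv.swap i (i + 1) * w →
          l'.length = invLen n (Equiv.swap i (i + 1) * w) →
          K.ψ i • (psiWord K l • z) = psiWord K l' • z) ∧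
      (∀ p q, 2 ≤ p → p < q → q ≤ b + 1 →
          (Equiv.swap i (i + 1) * w) p < (Equiv.swap i (i + 1) * w) q) ∧
      (∀ p q, b + 2 ≤ p → p < q → q ≤ n →
          (Equiv.swap i (i + 1) * w) p < (Equiv.swap i (i + 1) * w) q)) := by
  have hfixw : FixOut n w := hwfix
  constructor
  · -- Part (1): all of i, …, n lie in the arm
    intro hArm
    have hige : b + 2 ≤ i := by
      have hcard : (Finset.Icc i n).card ≤ (Finset.Icc (b + 2) n).card := by
        apply Finset.card_le_card_of_injOn (fun m => w.symm m)
        · intro m hm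
          simp only [Finset.coe_Icc, Set.mem_Icc] at hm ⊢
          exact ⟨hArm m hm.1 hm.2, (fixOut_range (fixOut_symm hfixw) (by omega) hm.2).2⟩
        · intro x _ y _ hxy
          exact w.symm.injective hxy
      rw [Nat.card_Icc, Nat.card_Icc] at hcard
      omega
    have hkey : ∀ d : ℕ, ∀ m, i ≤ m → m ≤ n → n - m = d → w.symm m = m := by
      intro d
      induction d using Nat.strong_induction_on with
      | _ d IHd =>
        intro m h1 h2 h3
        have hup : ∀ m', m < m' → m' ≤ n → w.symm m' = m' :=
          fun m' ha hb => IHd (n - m') (by omega) m' (by omega) hb rfl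
        have hrange := fixOut_range (fixOut_symm hfixw) (show 1 ≤ m by omega) h2
        have hwp : w (w.symm m) = m := w.apply_symm_apply m
        have hple : w.symm m ≤ m := by
          by_contra hc
          push_neg at hc
          have h4 := hup (w.symm m) hc hrange.2
          have h5 := w.apply_symm_apply (w.symm m)
          rw [h4] at h5
          rw [hwp] at h5
          omega
        by_cases hpe : w.symm m = m
        · exact hpe
        · exfalso
          have hplt : w.symm m < m := by omega
          have hpb : b + 2 ≤ w.symm m := hArm m h1 h2
          have hq := harm (w.symm m) (w.symm m + 1) hpb (by omega) (by omega)
          rw [hwp] at hq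
          have hr2 := fixOut_range hfixw (show 1 ≤ w.symm m + 1 by omega) (by omega)
          have h6 := hup (w (w.symm m + 1)) hq hr2.2
          rw [w.symm_apply_apply] at h6
          omega
    have hwid : ∀ m, i ≤ m → m ≤ n → w m = m := by
      intro m h1 h2
      have h3 := hkey (n - m) m h1 h2 rfl
      have h4 := w.apply_symm_apply m
      rw [h3] at h4
      exact h4
    have hcomm : Equiv.swap i (i + 1) * w = w * Equiv.swap i (i + 1) := by
      ext x
      simp only [Equiv.Perm.mul_apply]
      by_cases hx : x = i
      · rw [hx, hwid i le_rfl (by omega), Equiv.swap_apply_left,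
          hwid (i + 1) (by omega) (by omega)]
      · by_cases hx2 : x = i + 1
        · rw [hx2, hwid (i + 1) (by omega) (by omega), Equiv.swap_apply_right,
            hwid i le_rfl (by omega)]
        · rw [Equiv.swap_apply_of_ne_of_ne hx hx2]
          have hwx1 : w x ≠ i := fun he => hx (by
            rw [← hwid i le_rfl (by omega)] at he
            exact w.injective he)
          have hwx2 : w x ≠ i + 1 := fun he => hx2 (by
            rw [← hwid (i + 1) (by omega) (by omega)] at he
            exact w.injective he)
          exact Equiv.swap_apply_of_ne_of_ne hwx1 hwx2
    have hsmallw : ∀ p, 1 ≤ p → p ≤ i - 1 → (Equiv.swap i (i + 1) * w) p = w p := by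
      intro p hp1 hp2
      rw [Equiv.Perm.mul_apply]
      apply Equiv.swap_apply_of_ne_of_ne
      · intro he
        rw [← hwid i le_rfl (by omega)] at he
        have := w.injective he
        omega
      · intro he
        rw [← hwid (i + 1) (by omega) (by omega)] at he
        have := w.injective he
        omega
    have hdef : DefT n b i (Equiv.swap i (i + 1) * w) := by
      refine ⟨fixOut_swap_mul (by omega) (by omega) hfixw, ?_, hige, by omega, ?_, ?_, ?_, ?_, ?_⟩
      · rw [Equiv.Perm.mul_apply, hw1]
        exact Equiv.swap_apply_of_ne_of_ne (by omega) (by omega)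
      · rw [Equiv.Perm.mul_apply, hwid i le_rfl (by omega), Equiv.swap_apply_left]
      · rw [Equiv.Perm.mul_apply, hwid (i + 1) (by omega) (by omega), Equiv.swap_apply_right]
      · intro m h1 h2
        rw [Equiv.Perm.mul_apply, hwid m (by omega) h2]
        exact Equiv.swap_apply_of_ne_of_ne (by omega) (by omega)
      · intro p q hp hpq hq
        rw [hsmallw p (by omega) (by omega), hsmallw q (by omega) (by omega)]
        exact hleg p q hp hpq hq
      · intro p q hp hpq hq
        rw [hsmallw p (by omega) (by omega), hsmallw q (by omega) (by omega)]
        exact harm p q hp hpq (by omega)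
    have hinvu : invLen n (Equiv.swap i (i + 1) * w) = invLen n w + 1 := by
      apply invLen_swap_mul hfixw i (by omega) (by omega)
      rw [hkey (n - i) i le_rfl (by omega) rfl, hkey (n - (i + 1)) (i + 1) (by omega) (by omega) rfl]
      omega
    have hWD := psiWord_welldef K b (l.length + 1) (Equiv.swap i (i + 1) * w)
      (Or.inr ⟨i, hdef⟩) (by omega) (i :: l) (l ++ [i]) ?_ ?_ ?_ ?_ (by simp) (by simp)
    · have hpsi : psiWord K [i] = K.ψ i := by simp [psiWord]
      calc K.ψ i • (psiWord K l • z)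
          = (K.ψ i * psiWord K l) • z := (mul_smul _ _ _).symm
        _ = psiWord K (i :: l) • z := by rw [psiWord_cons]
        _ = psiWord K (l ++ [i]) • z := by rw [hWD]
        _ = (psiWord K l * psiWord K [i]) • z := by rw [psiWord_append]
        _ = psiWord K l • (psiWord K [i] • z) := mul_smul _ _ _
        _ = psiWord K l • (K.ψ i • z) := by rw [hpsi]
        _ = 0 := by rw [hpsiz i (by omega) (by omega) (by omega), smul_zero]
    · intro x hx
      rcases List.mem_cons.1 hx with h | h
      · subst h; exact ⟨by omega, by omega⟩
      · exact hl x h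
    · intro x hx
      rcases List.mem_append.1 hx with h | h
      · exact hl x h
      · rw [List.mem_singleton] at h
        subst h; exact ⟨by omega, by omega⟩
    · rw [List.map_cons, List.prod_cons, hlw]
    · rw [List.map_append, List.prod_append, hlw, List.map_singleton, List.prod_singleton]
      exact hcomm.symm
  · -- Part (2): i in the leg, i + 1 in the arm
    intro h2 h3 h4
    have hstdu : StdT n b (Equiv.swap i (i + 1) * w) := by
      refine ⟨fixOut_swap_mul (by omega) (by omega) hfixw, ?_, ?_, ?_⟩
      · rw [Equiv.Perm.mul_apply, hw1]
        exact Equiv.swap_apply_of_ne_of_ne (by omega) (by omega)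
      · apply incOn_swap hleg
        intro p q hp hphi hq hqhi
        rintro ⟨e1, e2⟩
        have h' := eq_symm_of_apply e2
        omega
      · apply incOn_swap harm
        intro p q hp hphi hq hqhi
        rintro ⟨e1, e2⟩
        have h' := eq_symm_of_apply e1
        omega
    refine ⟨?_, hstdu.2.2.1, hstdu.2.2.2⟩
    intro l' hv' hp' hlen'
    have hinvu : invLen n (Equiv.swap i (i + 1) * w) = invLen n w + 1 :=
      invLen_swap_mul hfixw i (by omega) (by omega) (by omega)
    have hWD := psiWord_welldef K b (l.length + 1) (Equiv.swap i (i + 1) * w)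
      (Or.inl hstdu) (by omega) (i :: l) l' ?_ hv' ?_ hp' (by simp) (by omega)
    · rw [← mul_smul, ← psiWord_cons, hWD]
    · intro x hx
      rcases List.mem_cons.1 hx with h | h
      · subst h; exact ⟨by omega, by omega⟩
      · exact hl x h
    · rw [List.map_cons, List.prod_cons, hlw]
end

section
/- Let e = 2, λ = (a,1^b) with a and b both even (so n = a+b even). Then every endomorphism of the Specht module S_λ of the Hecke algebra H_{F,q}(S_n) at q = −1 is a scalar multiple of the identity; in particular End(S_λ) is one-dimensional and S_λ is indecomposable. -/
open scoped BigOperators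

variable {A : Type*} [Ring A] {n : ℕ}

/-! ### Auxiliary machinery for the proof -/

def swapNat (r k : ℕ) : ℕ := if k = r then r + 1 else if k = r + 1 then r else k

lemma swapSeq_apply (r : ℕ) (i : ℕ → ZMod 2) (k : ℕ) :
    swapSeq r i k = i (swapNat r k) := by
  unfold swapSeq swapNat; split_ifs <;> rfl

lemma swapSeq_swapSeq (r : ℕ) (i : ℕ → ZMod 2) : swapSeq r (swapSeq r i) = i := by
  funext k
  by_cases h1 : k = r
  · subst h1; simp [swapSeq]
  · by_cases h2 : k = r + 1
    · subst h2; simp [swapSeq]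
    · simp [swapSeq, h1, h2]

lemma e_mul_psiWord (K : KLR A n) :
    ∀ (l : List ℕ), (∀ r ∈ l, 1 ≤ r ∧ r + 1 ≤ n) → ∀ (i : ℕ → ZMod 2),
      K.e i * psiWord K l = psiWord K l * K.e (l.foldl (fun acc r => swapSeq r acc) i)
  | [], _, i => by simp [psiWord]
  | r :: l, h, i => by
    have hr := h r (by simp)
    have hψ : K.e i * K.ψ r = K.ψ r * K.e (swapSeq r i) := by
      have h2 := K.psi_e r (swapSeq r i) hr.1 hr.2
      rw [swapSeq_swapSeq] at h2
      exact h2.symm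
    rw [psiWord_cons, ← mul_assoc, hψ, mul_assoc,
      e_mul_psiWord K l (fun x hx => h x (List.mem_cons_of_mem _ hx)) (swapSeq r i),
      ← mul_assoc, List.foldl_cons]

lemma psi_mul_psiWord (K : KLR A n) (j : ℕ) (hj1 : 1 ≤ j) (hj2 : j + 1 ≤ n) :
    ∀ (l : List ℕ), (∀ r ∈ l, 1 ≤ r ∧ r + 1 < j) →
      K.ψ j * psiWord K l = psiWord K l * K.ψ j
  | [], _ => by simp [psiWord]
  | r :: l, h => by
    have hr := h r (by simp)
    rw [psiWord_cons, ← mul_assoc, K.psi_comm r j hr.1 (by omega) hj1 hj2 hr.2, mul_assoc,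
      psi_mul_psiWord K j hj1 hj2 l (fun x hx => h x (List.mem_cons_of_mem _ hx)), ← mul_assoc]

lemma foldl_swapSeq : ∀ (l : List ℕ) (i : ℕ → ZMod 2),
    l.foldl (fun acc r => swapSeq r acc) i = fun k => i (l.foldr swapNat k)
  | [], i => rfl
  | r :: l, i => by
    funext k
    rw [List.foldl_cons, foldl_swapSeq l (swapSeq r i)]
    simp [swapSeq_apply]

lemma descList_nil (x y : ℕ) (h : x + 1 ≤ y) : descList x y = [] := by
  unfold descList
  rw [show x + 1 - y = 0 by omega]
  rfl

lemma descList_cons (x y : ℕ) (hy : 1 ≤ y) (h : y ≤ x) :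
    descList x y = x :: descList (x - 1) y := by
  unfold descList
  rw [show x + 1 - y = (x - y) + 1 by omega, List.range_succ_eq_map,
    show x - 1 + 1 - y = x - y by omega]
  simp only [List.map_cons, Nat.sub_zero, List.map_map]
  congr 1
  apply List.map_congr_left
  intro t ht
  simp only [Function.comp_apply]
  omega

lemma mem_descList {x y r : ℕ} (h : r ∈ descList x y) : y ≤ r ∧ r ≤ x := by
  unfold descList at h
  simp only [List.mem_map, List.mem_range] at h
  obtain ⟨t, ht, rfl⟩ := h
  omega

lemma foldr_swapNat_fixed : ∀ (l : List ℕ) (t : ℕ), (∀ r ∈ l, r + 1 < t) →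
    l.foldr swapNat t = t
  | [], _, _ => rfl
  | r :: l, t, h => by
    rw [List.foldr_cons, foldr_swapNat_fixed l t (fun x hx => h x (List.mem_cons_of_mem _ hx))]
    have := h r (by simp)
    unfold swapNat
    split_ifs <;> omega

lemma descList_foldr : ∀ (d x y : ℕ), 1 ≤ y → x + 1 = y + d →
    (descList x y).foldr swapNat y = x + 1
  | 0, x, y, hy, h => by
    rw [descList_nil x y (by omega), List.foldr_nil]; omega
  | d + 1, x, y, hy, h => by
    rw [descList_cons x y hy (by omega), List.foldr_cons,
      descList_foldr d (x - 1) y hy (by omega), show x - 1 + 1 = x by omega]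
    unfold swapNat
    simp

lemma flatMap_congr' {α β : Type*} {l : List α} {f g : α → List β}
    (h : ∀ a ∈ l, f a = g a) : l.flatMap f = l.flatMap g := by
  induction l with
  | nil => rfl
  | cons a l ih =>
    simp only [List.flatMap_cons]
    rw [h a (by simp), ih (fun x hx => h x (by simp [hx]))]

/-- the prefix of `tabWord` consisting of the first `b - 1` blocks. -/
def W0 (L : Finset ℕ) (b : ℕ) : List ℕ :=
  (List.range (b - 1)).flatMap fun k => descList ((L.sort (· ≤ ·)).getD k 0 - 1) (k + 2)

lemma tabWord_eq (L : Finset ℕ) (b : ℕ) (hcard : L.card = b) (hb : 1 ≤ b) :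
    tabWord L = W0 L b ++ descList ((L.sort (· ≤ ·)).getD (b - 1) 0 - 1) (b + 1) := by
  obtain ⟨b', rfl⟩ : ∃ b', b = b' + 1 := ⟨b - 1, by omega⟩
  unfold tabWord W0
  rw [hcard, List.range_succ, List.flatMap_append]
  simp

lemma sort_getD_mem (L : Finset ℕ) {k : ℕ} (hk : k < (L.sort (· ≤ ·)).length) :
    (L.sort (· ≤ ·)).getD k 0 ∈ L := by
  rw [List.getD_eq_getElem _ _ hk]
  exact (Finset.mem_sort _).mp (List.getElem_mem hk)

lemma sort_getD_lt (L : Finset ℕ) {k m : ℕ} (hk : k < m) (hm : m < (L.sort (· ≤ ·)).length) :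
    (L.sort (· ≤ ·)).getD k 0 < (L.sort (· ≤ ·)).getD m 0 := by
  rw [List.getD_eq_getElem _ _ (by omega), List.getD_eq_getElem _ _ hm]
  have hs := (Finset.sortedLT_sort L).pairwise
  have := List.pairwise_iff_get.mp hs ⟨k, by omega⟩ ⟨m, hm⟩ hk
  simpa using this

lemma sort_getD_add_le (L : Finset ℕ) {k : ℕ} :
    ∀ (d : ℕ), k + d < (L.sort (· ≤ ·)).length →
      (L.sort (· ≤ ·)).getD k 0 + d ≤ (L.sort (· ≤ ·)).getD (k + d) 0
  | 0, hm => by simp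
  | d + 1, hm => by
    have h1 := sort_getD_add_le L (k := k) d (by omega)
    have h2 := sort_getD_lt L (k := k + d) (m := k + d + 1) (by omega) (by omega)
    show _ + _ ≤ (L.sort (· ≤ ·)).getD (k + d + 1) 0
    omega

lemma sort_getD_last (L : Finset ℕ) (hne : L.Nonempty) :
    (L.sort (· ≤ ·)).getD (L.card - 1) 0 = L.max' hne := by
  have hlen : (L.sort (· ≤ ·)).length = L.card := Finset.length_sort _
  have hcard : 1 ≤ L.card := Finset.card_pos.mpr hne
  apply le_antisymm
  · exact Finset.le_max' _ _ (sort_getD_mem L (by omega))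
  · obtain ⟨i, hi⟩ := List.mem_iff_get.mp ((Finset.mem_sort (· ≤ ·)).mpr (L.max'_mem hne))
    have hmono := (Finset.pairwise_sort L (· ≤ ·)).sortedLE.monotone_get
      (show i ≤ ⟨L.card - 1, by omega⟩ from by
        have := i.2; simp only [Fin.mk_le_mk, Fin.le_def]; omega)
    rw [← hi]
    rw [List.getD_eq_getElem _ _ (by omega)]
    simpa using hmono

lemma mem_W0 (L : Finset ℕ) (b : ℕ) (hcard : L.card = b) (hne : L.Nonempty)
    {r : ℕ} (hr : r ∈ W0 L b) : 2 ≤ r ∧ r + 1 < L.max' hne := by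
  unfold W0 at hr
  simp only [List.mem_flatMap, List.mem_range] at hr
  obtain ⟨k, hk, hrk⟩ := hr
  have h2 := mem_descList hrk
  have hb : 1 ≤ b := by
    have := Finset.card_pos.mpr hne; omega
  have hlen : (L.sort (· ≤ ·)).length = b := by rw [Finset.length_sort]; exact hcard
  have hlt : (L.sort (· ≤ ·)).getD k 0 < (L.sort (· ≤ ·)).getD (b - 1) 0 :=
    sort_getD_lt L (by omega) (by omega)
  have hlast : (L.sort (· ≤ ·)).getD (b - 1) 0 = L.max' hne := by
    rw [← hcard] at *; exact sort_getD_last L hne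
  omega

lemma mem_tabWord' (L : Finset ℕ) {r : ℕ} (hr : r ∈ tabWord L) :
    2 ≤ r ∧ ∃ x ∈ L, r + 1 ≤ x := by
  unfold tabWord at hr
  simp only [List.mem_flatMap, List.mem_range] at hr
  obtain ⟨k, hk, hrk⟩ := hr
  have h2 := mem_descList hrk
  have hlen : (L.sort (· ≤ ·)).length = L.card := Finset.length_sort _
  refine ⟨by omega, (L.sort (· ≤ ·)).getD k 0, sort_getD_mem L (by omega), by omega⟩

lemma sort_up (L : Finset ℕ) (hne : L.Nonempty) :
    (insert (L.max' hne + 1) (L.erase (L.max' hne))).sort (· ≤ ·)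
      = (L.sort (· ≤ ·)).dropLast ++ [L.max' hne + 1] := by
  set j := L.max' hne with hj
  have hjm : j ∈ L := L.max'_mem hne
  have hle : ∀ x ∈ L, x ≤ j := fun x hx => Finset.le_max' L x hx
  have hnm : j + 1 ∉ L := fun h => by have := hle _ h; omega
  have hnm' : j + 1 ∉ L.erase j := fun h => hnm (Finset.mem_of_mem_erase h)
  have hs0 : (L.sort (· ≤ ·)).length = L.card := Finset.length_sort _
  have hcard : 1 ≤ L.card := Finset.card_pos.mpr hne
  have hs : (L.sort (· ≤ ·)) ≠ [] := by
    intro h; rw [h] at hs0; simp at hs0; omega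
  have hsplit := List.dropLast_append_getLast hs
  have hsorted := Finset.pairwise_sort L (· ≤ ·)
  have hcross : ∀ x ∈ (L.sort (· ≤ ·)).dropLast, x ≤ (L.sort (· ≤ ·)).getLast hs := by
    intro x hx
    have h2 : List.Pairwise (· ≤ ·) ((L.sort (· ≤ ·)).dropLast ++ [(L.sort (· ≤ ·)).getLast hs]) := by
      rw [hsplit]; exact hsorted
    obtain ⟨-, -, h3⟩ := List.pairwise_append.mp h2
    exact h3 x hx _ (by simp)
  have hlast : (L.sort (· ≤ ·)).getLast hs = j := by
    apply le_antisymm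
    · exact hle _ ((Finset.mem_sort _).mp (List.getLast_mem hs))
    · have hjs : j ∈ L.sort (· ≤ ·) := (Finset.mem_sort _).mpr hjm
      rw [← hsplit] at hjs
      rcases List.mem_append.mp hjs with h | h
      · exact hcross j h
      · simp at h; omega
  -- permutation chain
  have p1 : (L.sort (· ≤ ·)).dropLast.Perm (L.erase j).toList := by
    have q1 : ((L.sort (· ≤ ·)).dropLast ++ [j]).Perm (L.sort (· ≤ ·)) := by
      rw [← hlast, hsplit]
    have q2 : (L.sort (· ≤ ·)).Perm L.toList := Finset.sort_perm_toList _ _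
    have q3 : L.toList.Perm (j :: (L.erase j).toList) := by
      conv_lhs => rw [← Finset.insert_erase hjm]
      exact Finset.toList_insert (Finset.notMem_erase _ _)
    have q4 : (j :: (L.sort (· ≤ ·)).dropLast).Perm (j :: (L.erase j).toList) :=
      ((List.perm_append_singleton j _).symm.trans (q1.trans (q2.trans q3)))
    exact q4.cons_inv
  have hperm : ((L.sort (· ≤ ·)).dropLast ++ [j + 1]).Perm
      ((insert (j + 1) (L.erase j)).sort (· ≤ ·)) := by
    have q5 : ((L.sort (· ≤ ·)).dropLast ++ [j + 1]).Perm ((j + 1) :: (L.erase j).toList) :=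
      (List.perm_append_singleton (j + 1) _).trans (p1.cons (j + 1))
    have q6 : ((insert (j + 1) (L.erase j)).sort (· ≤ ·)).Perm
        ((j + 1) :: (L.erase j).toList) :=
      (Finset.sort_perm_toList _ _).trans (Finset.toList_insert hnm')
    exact q5.trans q6.symm
  have hsorted2 : List.Pairwise (· ≤ ·) ((L.sort (· ≤ ·)).dropLast ++ [j + 1]) := by
    rw [List.pairwise_append]
    refine ⟨hsorted.sublist (List.dropLast_sublist _), by simp, ?_⟩
    intro x hx y hy
    simp at hy
    subst hy
    have := hcross x hx
    omega
  exact List.Perm.eq_of_pairwise' (Finset.pairwise_sort _ _) hsorted2 hperm.symm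

lemma up_card (L : Finset ℕ) (hne : L.Nonempty) :
    (insert (L.max' hne + 1) (L.erase (L.max' hne))).card = L.card := by
  have hjm := L.max'_mem hne
  have hnm' : L.max' hne + 1 ∉ L.erase (L.max' hne) := fun h => by
    have := Finset.le_max' L _ (Finset.mem_of_mem_erase h); omega
  rw [Finset.card_insert_of_notMem hnm', Finset.card_erase_of_mem hjm]
  have := Finset.card_pos.mpr hne
  omega

lemma tabWord_up (L : Finset ℕ) (b : ℕ) (hcard : L.card = b) (hne : L.Nonempty) :
    tabWord (insert (L.max' hne + 1) (L.erase (L.max' hne)))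
      = W0 L b ++ descList (L.max' hne) (b + 1) := by
  set j := L.max' hne with hj
  have hb : 1 ≤ b := by have := Finset.card_pos.mpr hne; omega
  have hcard' : (insert (j + 1) (L.erase j)).card = b := by rw [up_card L hne, hcard]
  have hslen : (L.sort (· ≤ ·)).length = b := by rw [Finset.length_sort]; exact hcard
  have hdll : (L.sort (· ≤ ·)).dropLast.length = b - 1 := by
    rw [List.length_dropLast, hslen]
  have hsup : (insert (j + 1) (L.erase j)).sort (· ≤ ·)
      = (L.sort (· ≤ ·)).dropLast ++ [j + 1] := by
    rw [hj]; exact sort_up L hne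
  rw [tabWord_eq _ b hcard' hb, hsup]
  congr 1
  · unfold W0
    rw [hsup]
    apply flatMap_congr'
    intro k hk
    rw [List.mem_range] at hk
    have hgd : ((L.sort (· ≤ ·)).dropLast ++ [j + 1]).getD k 0 = (L.sort (· ≤ ·)).getD k 0 := by
      rw [List.getD_append _ _ _ _ (by omega), List.getD_eq_getElem _ _ (by omega),
        List.getD_eq_getElem _ _ (by omega), List.getElem_dropLast]
    rw [hgd]
  · rw [List.getD_append_right _ _ _ _ (by omega), hdll, show b - 1 - (b - 1) = 0 by omega]
    simp

lemma tabWord_Icc (b : ℕ) : tabWord (Finset.Icc 2 (b + 1)) = [] := by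
  rcases Nat.eq_zero_or_pos b with hb | hb
  · subst hb
    unfold tabWord
    rw [Nat.card_Icc]
    rfl
  · unfold tabWord
    rw [List.flatMap_eq_nil_iff]
    intro k hk
    rw [List.mem_range, Nat.card_Icc, show b + 1 + 1 - 2 = b by omega] at hk
    have hslen : ((Finset.Icc 2 (b + 1)).sort (· ≤ ·)).length = b := by
      rw [Finset.length_sort, Nat.card_Icc]; omega
    have h1 := sort_getD_add_le (Finset.Icc 2 (b + 1)) (k := k) (b - 1 - k) (by omega)
    have h2 : ((Finset.Icc 2 (b + 1)).sort (· ≤ ·)).getD (b - 1) 0 ≤ b + 1 := by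
      have := sort_getD_mem (Finset.Icc 2 (b + 1)) (k := b - 1) (by omega)
      exact (Finset.mem_Icc.mp this).2
    rw [show k + (b - 1 - k) = b - 1 by omega] at h1
    apply descList_nil
    omega

/-- Theorem `a/b evens`: `e = 2` (`q = -1`), `λ = (a, 1^b)` with `a`, `b`
both even.  The Specht module `S_λ` of the Hecke algebra (in its KLR presentation, with
generator `z` and homogeneous basis `{v_T : T ∈ Std(λ)}`, where `v_T = ψ_{w_T} z` is indexed
below by the `b`-element set of leg entries of `T`) has one-dimensional endomorphism algebra:
every endomorphism is a scalar multiple of the identity.  In particular `S_λ` is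
indecomposable. -/
theorem specht_hook_endomorphisms_scalar_of_even_even
    {F M : Type*} [Field F] [Algebra F A]
    [AddCommGroup M] [Module A M] [Module F M] [IsScalarTower F A M]
    (a b : ℕ) (hn : n = a + b) (ha : 1 ≤ a) (haeven : Even a) (hbeven : Even b)
    (K : KLR A n) (z : M)
    (hy : ∀ k, 1 ≤ k → k ≤ n → K.y k • z = 0)
    (he1 : K.e (iLamGen b) • z = z)
    (he2 : ∀ i, i ≠ iLamGen b → K.e i • z = 0)
    (hpsiz : ∀ j, 1 ≤ j → j + 1 ≤ n → j ≠ b + 1 → K.ψ j • z = 0)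
    (hgar : ascWord K 1 (b + 1) • z = 0)
    (hgen : Submodule.span A {z} = ⊤)
    (B : Module.Basis ((Finset.Icc 2 n).powersetCard b) F M)
    (hB : ∀ L, B L = psiWord K (tabWord L.1) • z) :
    ∀ g : M →ₗ[A] M, ∃ c : F, ∀ m : M, g m = c • m := by
  classical
  intro g
  -- numerical parity facts
  have hb2 : ((b : ℕ) : ZMod 2) = 0 := by
    obtain ⟨t, rfl⟩ := hbeven
    push_cast
    rw [show ((t : ZMod 2) + t) = 2 * t by ring, show (2 : ZMod 2) = 0 by decide, zero_mul]
  have hnE : Even n := by rw [hn]; exact haeven.add hbeven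
  have hn2 : ((n : ℕ) : ZMod 2) = 0 := by
    obtain ⟨t, ht⟩ := hnE
    rw [ht]
    push_cast
    rw [show ((t : ZMod 2) + t) = 2 * t by ring, show (2 : ZMod 2) = 0 by decide, zero_mul]
  have hiLam : ∀ k, iLamGen b k = (k : ZMod 2) + 1 := by
    intro k
    unfold iLamGen
    split_ifs with h
    · rfl
    · rw [hb2]; ring
  have hba : 2 ≤ a := by obtain ⟨t, rfl⟩ := haeven; omega
  have hbn : b + 2 ≤ n := by omega
  have smulF : ∀ (x : A) (cc : F) (m : M), x • (cc • m) = cc • (x • m) := by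
    intro x cc m
    rw [← algebraMap_smul A cc m, ← mul_smul, ← Algebra.commutes cc x, mul_smul,
      algebraMap_smul]
  set w := g z with hw
  have hBrepr : ∀ (x : A) (L' : {s // s ∈ (Finset.Icc 2 n).powersetCard b}),
      B.repr (x • w) L' = ∑ M : {s // s ∈ (Finset.Icc 2 n).powersetCard b},
        (B.repr w) M * (B.repr (x • B M)) L' := by
    intro x L'
    have h1 : x • w = ∑ M : {s // s ∈ (Finset.Icc 2 n).powersetCard b},
        (B.repr w) M • (x • B M) := by
      conv_lhs => rw [← Module.Basis.sum_repr B w]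
      rw [Finset.smul_sum]
      exact Finset.sum_congr rfl fun M _ => smulF _ _ _
    rw [h1, map_sum, Finset.sum_apply']
    exact Finset.sum_congr rfl fun M _ => by
      rw [map_smul, Finsupp.smul_apply, smul_eq_mul]
  have hL0mem : Finset.Icc 2 (b + 1) ∈ (Finset.Icc 2 n).powersetCard b := by
    rw [Finset.mem_powersetCard]
    exact ⟨fun x hx => by rw [Finset.mem_Icc] at *; omega, by rw [Nat.card_Icc]; omega⟩
  set L₀ : {s // s ∈ (Finset.Icc 2 n).powersetCard b} := ⟨Finset.Icc 2 (b + 1), hL0mem⟩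
    with hL₀def
  have hBz : B L₀ = z := by
    rw [hB L₀]
    show psiWord K (tabWord (Finset.Icc 2 (b + 1))) • z = z
    rw [tabWord_Icc]
    show (1 : A) • z = z
    rw [one_smul]
  -- action of the idempotent on basis vectors
  have hEB : ∀ (Lx : {s // s ∈ (Finset.Icc 2 n).powersetCard b}),
      K.e (iLamGen b) • B Lx =
        if (tabWord Lx.1).foldl (fun acc r => swapSeq r acc) (iLamGen b) = iLamGen b
        then B Lx else 0 := by
    intro Lx
    obtain ⟨hsub, hcard⟩ := Finset.mem_powersetCard.mp Lx.2
    have hlet : ∀ r ∈ tabWord Lx.1, 1 ≤ r ∧ r + 1 ≤ n := by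
      intro r hr
      obtain ⟨h2, x, hx, hrx⟩ := mem_tabWord' Lx.1 hr
      have := (Finset.mem_Icc.mp (hsub hx)).2
      omega
    rw [hB Lx, ← mul_smul, e_mul_psiWord K _ hlet, mul_smul]
    split_ifs with h
    · rw [h, he1]
    · rw [he2 _ h, smul_zero]
  -- ψ_j kills words entirely below j
  have hPsi0 : ∀ (Lx : {s // s ∈ (Finset.Icc 2 n).powersetCard b}) (j : ℕ),
      2 ≤ j → j + 1 ≤ n → j ≠ b + 1 → (∀ x ∈ Lx.1, x < j) → K.ψ j • B Lx = 0 := by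
    intro Lx j hj2 hjn hjb hxlt
    have hlet : ∀ r ∈ tabWord Lx.1, 1 ≤ r ∧ r + 1 < j := by
      intro r hr
      obtain ⟨h2, x, hx, hrx⟩ := mem_tabWord' Lx.1 hr
      have := hxlt x hx
      omega
    rw [hB Lx, ← mul_smul, psi_mul_psiWord K j (by omega) hjn _ hlet, mul_smul,
      hpsiz j (by omega) hjn hjb, smul_zero]
  -- ψ_(max) pushes the top of the last column up by one
  have hPsiUp : ∀ (Lx : {s // s ∈ (Finset.Icc 2 n).powersetCard b}) (hne : Lx.1.Nonempty),
      b + 2 ≤ Lx.1.max' hne → Lx.1.max' hne + 1 ≤ n →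
      ∃ Lx' : {s // s ∈ (Finset.Icc 2 n).powersetCard b},
        Lx'.1 = insert (Lx.1.max' hne + 1) (Lx.1.erase (Lx.1.max' hne)) ∧
        K.ψ (Lx.1.max' hne) • B Lx = B Lx' := by
    intro Lx hne hjb hjn
    obtain ⟨hsub, hcard⟩ := Finset.mem_powersetCard.mp Lx.2
    have hb1 : 1 ≤ b := by
      have := Finset.card_pos.mpr hne; omega
    have hupmem : insert (Lx.1.max' hne + 1) (Lx.1.erase (Lx.1.max' hne))
        ∈ (Finset.Icc 2 n).powersetCard b := by
      rw [Finset.mem_powersetCard]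
      constructor
      · intro x hx
        rcases Finset.mem_insert.mp hx with h | h
        · subst h; rw [Finset.mem_Icc]; omega
        · exact hsub (Finset.mem_of_mem_erase h)
      · rw [up_card Lx.1 hne]; exact hcard
    refine ⟨⟨_, hupmem⟩, rfl, ?_⟩
    rw [hB Lx, hB ⟨_, hupmem⟩]
    show K.ψ (Lx.1.max' hne) • (psiWord K (tabWord Lx.1) • z)
      = psiWord K (tabWord (insert (Lx.1.max' hne + 1) (Lx.1.erase (Lx.1.max' hne)))) • z
    have hlast : (Lx.1.sort (· ≤ ·)).getD (b - 1) 0 = Lx.1.max' hne := by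
      have h5 := sort_getD_last Lx.1 hne
      rw [hcard] at h5
      exact h5
    have hw0 : ∀ r ∈ W0 Lx.1 b, 1 ≤ r ∧ r + 1 < Lx.1.max' hne := by
      intro r hr
      obtain ⟨h1, h2⟩ := mem_W0 Lx.1 b hcard hne hr
      exact ⟨by omega, h2⟩
    rw [tabWord_eq Lx.1 b hcard hb1, hlast, tabWord_up Lx.1 b hcard hne,
      psiWord_append, psiWord_append, ← mul_smul, ← mul_assoc,
      psi_mul_psiWord K (Lx.1.max' hne) (by omega) hjn _ hw0, mul_assoc,
      descList_cons (Lx.1.max' hne) (b + 1) (by omega) (by omega), psiWord_cons, mul_smul]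
  -- evaluation of the residue-permutation at b+1
  have hfoldeval : ∀ (Lx : {s // s ∈ (Finset.Icc 2 n).powersetCard b}) (hne : Lx.1.Nonempty),
      (tabWord Lx.1).foldr swapNat (b + 1) = Lx.1.max' hne := by
    intro Lx hne
    obtain ⟨hsub, hcard⟩ := Finset.mem_powersetCard.mp Lx.2
    have hb1 : 1 ≤ b := by have := Finset.card_pos.mpr hne; omega
    have hlast : (Lx.1.sort (· ≤ ·)).getD (b - 1) 0 = Lx.1.max' hne := by
      have h5 := sort_getD_last Lx.1 hne
      rw [hcard] at h5
      exact h5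
    have hslen : (Lx.1.sort (· ≤ ·)).length = b := by rw [Finset.length_sort]; exact hcard
    have h0 : 2 ≤ (Lx.1.sort (· ≤ ·)).getD 0 0 := by
      have := sort_getD_mem Lx.1 (k := 0) (by omega)
      exact (Finset.mem_Icc.mp (hsub this)).1
    have h1 := sort_getD_add_le Lx.1 (k := 0) (b - 1) (by omega)
    rw [show 0 + (b - 1) = b - 1 by omega] at h1
    have hmaxge : b + 1 ≤ Lx.1.max' hne := by omega
    rw [tabWord_eq Lx.1 b hcard hb1, List.foldr_append, hlast,
      descList_foldr (Lx.1.max' hne - (b + 1)) (Lx.1.max' hne - 1) (b + 1) (by omega)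
        (by omega),
      show Lx.1.max' hne - 1 + 1 = Lx.1.max' hne by omega]
    apply foldr_swapNat_fixed
    intro r hr
    exact (mem_W0 Lx.1 b hcard hne hr).2
  -- main elimination, by downward induction on the largest leg entry
  have key : ∀ (t : ℕ) (Lx : {s // s ∈ (Finset.Icc 2 n).powersetCard b}),
      Lx ≠ L₀ → n - Lx.1.sup id ≤ t → B.repr w Lx = 0 := by
    intro t
    induction t using Nat.strong_induction_on with
    | _ t IH =>
    intro Lx hL0 ht
    obtain ⟨hsub, hcard⟩ := Finset.mem_powersetCard.mp Lx.2
    have hb1 : 1 ≤ b := by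
      by_contra hcon
      apply hL0
      apply Subtype.ext
      have h1 : Lx.1 = ∅ := Finset.card_eq_zero.mp (by omega)
      have h2 : Finset.Icc 2 (b + 1) = ∅ := Finset.Icc_eq_empty (by omega)
      rw [h1]
      exact h2.symm
    have hne : Lx.1.Nonempty := Finset.card_pos.mp (by omega)
    have hjmem : Lx.1.max' hne ∈ Lx.1 := Lx.1.max'_mem hne
    have hxle : ∀ x ∈ Lx.1, x ≤ Lx.1.max' hne := fun x hx => Finset.le_max' _ x hx
    have hjn : Lx.1.max' hne ≤ n := (Finset.mem_Icc.mp (hsub hjmem)).2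
    have hsup : Lx.1.sup id = Lx.1.max' hne :=
      le_antisymm (Finset.sup_le fun x hx => Finset.le_max' _ x hx)
        (Finset.le_sup (f := id) hjmem)
    have hjb2 : b + 2 ≤ Lx.1.max' hne := by
      by_contra hcon
      apply hL0
      apply Subtype.ext
      have hss : Lx.1 ⊆ Finset.Icc 2 (b + 1) := by
        intro x hx
        rw [Finset.mem_Icc]
        refine ⟨(Finset.mem_Icc.mp (hsub hx)).1, ?_⟩
        have := hxle x hx
        omega
      exact Finset.eq_of_subset_of_card_le hss (by rw [Nat.card_Icc, hcard]; omega)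
    by_cases hdom :
        (tabWord Lx.1).foldl (fun acc r => swapSeq r acc) (iLamGen b) = iLamGen b
    · -- the residue sequence is fixed: the largest leg entry is odd, use ψ_max
      have hjz : ((Lx.1.max' hne : ℕ) : ZMod 2) = 1 := by
        have h1 : iLamGen b ((tabWord Lx.1).foldr swapNat (b + 1)) = iLamGen b (b + 1) := by
          have := congrFun hdom (b + 1)
          rwa [foldl_swapSeq] at this
        rw [hfoldeval Lx hne, hiLam, hiLam] at h1
        have h2 : ((Lx.1.max' hne : ℕ) : ZMod 2) = ((b : ℕ) : ZMod 2) + 1 := by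
          have h3 := add_right_cancel h1
          rw [h3]
          push_cast
          ring
        rw [h2, hb2, zero_add]
      have hjnn : Lx.1.max' hne ≠ n := by
        intro h
        rw [h, hn2] at hjz
        exact absurd hjz (by decide)
      have hjn1 : Lx.1.max' hne + 1 ≤ n := by omega
      obtain ⟨L', hL'val, hL'psi⟩ := hPsiUp Lx hne hjb2 hjn1
      have hpw : K.ψ (Lx.1.max' hne) • w = 0 := by
        rw [hw, ← map_smul, hpsiz _ (by omega) hjn1 (by omega), map_zero]
      have h0 := hBrepr (K.ψ (Lx.1.max' hne)) L'
      rw [hpw, map_zero, Finsupp.coe_zero, Pi.zero_apply] at h0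
      have hterm : (B.repr (K.ψ (Lx.1.max' hne) • B Lx)) L' = 1 := by
        rw [hL'psi, Module.Basis.repr_self, Finsupp.single_eq_same]
      have hother : ∀ M : {s // s ∈ (Finset.Icc 2 n).powersetCard b}, M ∈ Finset.univ →
          M ≠ Lx → (B.repr w) M * (B.repr (K.ψ (Lx.1.max' hne) • B M)) L' = 0 := by
        intro M _ hMLx
        obtain ⟨hsubM, hcardM⟩ := Finset.mem_powersetCard.mp M.2
        have hneM : M.1.Nonempty := Finset.card_pos.mp (by omega)
        have hjMn : M.1.max' hneM ≤ n :=
          (Finset.mem_Icc.mp (hsubM (M.1.max'_mem hneM))).2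
        rcases lt_trichotomy (M.1.max' hneM) (Lx.1.max' hne) with hlt | heq | hgt
        · rw [hPsi0 M (Lx.1.max' hne) (by omega) hjn1 (by omega)
            (fun x hx => lt_of_le_of_lt (Finset.le_max' _ x hx) hlt),
            map_zero, Finsupp.coe_zero, Pi.zero_apply, mul_zero]
        · obtain ⟨M', hM'val, hM'psi⟩ := hPsiUp M hneM (by omega) (by omega)
          rw [heq] at hM'val hM'psi
          rw [hM'psi, Module.Basis.repr_self, Finsupp.single_apply, if_neg, mul_zero]
          intro hM'L'
          apply hMLx
          apply Subtype.ext
          have hval : insert (Lx.1.max' hne + 1) (M.1.erase (Lx.1.max' hne))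
              = insert (Lx.1.max' hne + 1) (Lx.1.erase (Lx.1.max' hne)) := by
            rw [← hM'val, ← hL'val, hM'L']
          have h1 : (Lx.1.max' hne + 1) ∉ M.1.erase (Lx.1.max' hne) := by
            intro h
            have := Finset.le_max' M.1 _ (Finset.mem_of_mem_erase h)
            omega
          have h2 : (Lx.1.max' hne + 1) ∉ Lx.1.erase (Lx.1.max' hne) := by
            intro h
            have := hxle _ (Finset.mem_of_mem_erase h)
            omega
          have h3 : M.1.erase (Lx.1.max' hne) = Lx.1.erase (Lx.1.max' hne) := by
            have h4 := congrArg (fun (s : Finset ℕ) => s.erase (Lx.1.max' hne + 1)) hval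
            simpa [Finset.erase_insert h1, Finset.erase_insert h2] using h4
          have hjmemM : Lx.1.max' hne ∈ M.1 := by
            rw [← heq]; exact M.1.max'_mem hneM
          rw [← Finset.insert_erase hjmemM, h3, Finset.insert_erase hjmem]
        · have hMne0 : M ≠ L₀ := by
            intro h
            have hmle : M.1.max' hneM ≤ b + 1 := by
              apply Finset.max'_le
              intro x hx
              rw [h] at hx
              exact (Finset.mem_Icc.mp hx).2
            omega
          have hsupM : M.1.sup id = M.1.max' hneM :=
            le_antisymm (Finset.sup_le fun x hx => Finset.le_max' _ x hx)
              (Finset.le_sup (f := id) (M.1.max'_mem hneM))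
          have hIH := IH (n - M.1.sup id) (by omega) M hMne0 le_rfl
          rw [hIH, zero_mul]
      rw [Finset.sum_eq_single_of_mem Lx (Finset.mem_univ _) hother, hterm, mul_one] at h0
      exact h0.symm
    · -- the residue sequence moves: use the idempotent
      have hew : K.e (iLamGen b) • w = w := by
        rw [hw, ← map_smul, he1]
      have h0 := hBrepr (K.e (iLamGen b)) Lx
      rw [hew] at h0
      rw [h0]
      apply Finset.sum_eq_zero
      intro M _
      rw [hEB M]
      split_ifs with hM
      · rw [Module.Basis.repr_self, Finsupp.single_apply, if_neg, mul_zero]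
        intro hMLx
        exact hdom (hMLx ▸ hM)
      · rw [map_zero, Finsupp.coe_zero, Pi.zero_apply, mul_zero]
  have hall : ∀ Lxx : {s // s ∈ (Finset.Icc 2 n).powersetCard b},
      Lxx ≠ L₀ → B.repr w Lxx = 0 :=
    fun Lxx h => key (n - Lxx.1.sup id) Lxx h le_rfl
  refine ⟨B.repr w L₀, ?_⟩
  intro m
  have hwz : w = (B.repr w L₀) • z := by
    conv_lhs => rw [← Module.Basis.sum_repr B w]
    rw [Finset.sum_eq_single_of_mem L₀ (Finset.mem_univ _)
      (fun M _ hM => by rw [hall M hM, zero_smul]), hBz]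
  have hm : m ∈ Submodule.span A {z} := by rw [hgen]; trivial
  obtain ⟨x, hx⟩ := Submodule.mem_span_singleton.mp hm
  rw [← hx]
  calc g (x • z) = x • g z := map_smul g x z
    _ = x • ((B.repr w L₀) • z) := by rw [← hw]; conv_lhs => rw [hwz]
    _ = (B.repr w L₀) • (x • z) := smulF x _ z
end

section
/- Let e = 2 and λ = (a,1^b) a hook partition with b even, and let T be a domino tableau for λ. Then in the Specht module S_λ: (a) y_k v_T = 0 for all k = 1,…,n; (b) ψ_k v_T = 0 for all even k; (c) ψ_1 v_T = 0. -/
open scoped BigOperators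

variable {A : Type*} [Ring A] {n : ℕ}

section SpechtAux

variable {M : Type*} [AddCommGroup M] [Module A M]

/-! ### The alternating residue sequence -/

/-- The alternating residue sequence `k ↦ k + 1 (mod 2)`. -/
def iAlt : ℕ → ZMod 2 := fun k => (k : ZMod 2) + 1

lemma iAlt_eq {k m : ℕ} (h : k % 2 = m % 2) : iAlt k = iAlt m := by
  unfold iAlt
  have : (k : ZMod 2) = m := by rw [ZMod.natCast_eq_natCast_iff]; exact h
  rw [this]

lemma iAlt_ne {k m : ℕ} (h : ¬ k % 2 = m % 2) : iAlt k ≠ iAlt m := by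
  intro he
  apply h
  unfold iAlt at he
  have h2 : (k : ZMod 2) = m := by
    have := add_right_cancel he
    exact this
  exact (ZMod.natCast_eq_natCast_iff k m 2).mp h2

lemma iLam_even {b : ℕ} (hb : b % 2 = 0) : iLamGen b = iAlt := by
  have hb0 : (b : ZMod 2) = 0 := by
    have h2 : (b : ZMod 2) = ((0 : ℕ) : ZMod 2) := by
      rw [ZMod.natCast_eq_natCast_iff]
      show b % 2 = 0 % 2
      omega
    simpa using h2
  funext k
  simp only [iLamGen, iAlt]
  split_ifs with h
  · rfl
  · rw [hb0, add_zero]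

lemma swap_eval (r : ℕ) (i : ℕ → ZMod 2) (k m : ℕ)
    (h : (k = r ∧ m = r + 1) ∨ (k = r + 1 ∧ m = r) ∨ (k ≠ r ∧ k ≠ r + 1 ∧ m = k)) :
    swapSeq r i k = i m := by
  unfold swapSeq
  rcases h with ⟨h1, h2⟩ | ⟨h1, h2⟩ | ⟨h1, h2, h3⟩
  · subst h1; subst h2; rw [if_pos rfl]
  · subst h1; subst h2; rw [if_neg (by omega), if_pos rfl]
  · subst h3; rw [if_neg h1, if_neg h2]

/-! ### Module-level forms of the KLR relations -/

lemma psi_e_smul (K : KLR A n) (r : ℕ) (i : ℕ → ZMod 2) (u : M)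
    (hr1 : 1 ≤ r) (hr2 : r + 1 ≤ n) (hu : K.e i • u = u) :
    K.e (swapSeq r i) • (K.ψ r • u) = K.ψ r • u := by
  conv_lhs => rw [← hu]
  conv_rhs => rw [← hu]
  simp only [← mul_smul, ← mul_assoc]
  rw [← K.psi_e r i hr1 hr2, mul_assoc, K.e_idem i, K.psi_e r i hr1 hr2]

lemma yPsiDiff (K : KLR A n) (r s : ℕ) (i : ℕ → ZMod 2) (u : M) (hs : s = r + 1)
    (hr1 : 1 ≤ r) (hr2 : r + 1 ≤ n) (hi : i r ≠ i s) (hu : K.e i • u = u) :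
    K.y r • (K.ψ r • u) = K.ψ r • (K.y s • u) := by
  subst hs
  conv_lhs => rw [← hu]
  conv_rhs => rw [← hu]
  simp only [← mul_smul, ← mul_assoc]
  rw [K.y_psi_diff r i hr1 hr2 hi]

lemma yPsiSame (K : KLR A n) (r s : ℕ) (i : ℕ → ZMod 2) (u : M) (hs : s = r + 1)
    (hr1 : 1 ≤ r) (hr2 : r + 1 ≤ n) (hi : i r = i s) (hu : K.e i • u = u) :
    K.y r • (K.ψ r • u) = K.ψ r • (K.y s • u) - u := by
  subst hs
  conv_lhs => rw [← hu]
  conv_rhs => rw [← hu]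
  simp only [← mul_smul, ← mul_assoc]
  rw [K.y_psi_same r i hr1 hr2 hi, sub_mul, one_mul, sub_smul]

lemma yPsiDiff' (K : KLR A n) (r s : ℕ) (i : ℕ → ZMod 2) (u : M) (hs : s = r + 1)
    (hr1 : 1 ≤ r) (hr2 : r + 1 ≤ n) (hi : i r ≠ i s) (hu : K.e i • u = u) :
    K.y s • (K.ψ r • u) = K.ψ r • (K.y r • u) := by
  subst hs
  conv_lhs => rw [← hu]
  conv_rhs => rw [← hu]
  simp only [← mul_smul, ← mul_assoc]
  rw [K.y_psi_diff' r i hr1 hr2 hi]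

lemma yPsiSame' (K : KLR A n) (r s : ℕ) (i : ℕ → ZMod 2) (u : M) (hs : s = r + 1)
    (hr1 : 1 ≤ r) (hr2 : r + 1 ≤ n) (hi : i r = i s) (hu : K.e i • u = u) :
    K.y s • (K.ψ r • u) = K.ψ r • (K.y r • u) + u := by
  subst hs
  conv_lhs => rw [← hu]
  conv_rhs => rw [← hu]
  simp only [← mul_smul, ← mul_assoc]
  rw [K.y_psi_same' r i hr1 hr2 hi, add_mul, one_mul, add_smul]

lemma yPsiComm (K : KLR A n) (r s : ℕ) (u : M)
    (hr1 : 1 ≤ r) (hr2 : r + 1 ≤ n) (hs1 : 1 ≤ s) (hs2 : s ≤ n)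
    (h1 : s ≠ r) (h2 : s ≠ r + 1) :
    K.y s • (K.ψ r • u) = K.ψ r • (K.y s • u) := by
  simp only [← mul_smul]
  rw [K.y_psi_comm r s hr1 hr2 hs1 hs2 h1 h2]

lemma psiComm (K : KLR A n) (r s : ℕ) (u : M)
    (hr1 : 1 ≤ r) (hr2 : r + 1 ≤ n) (hs1 : 1 ≤ s) (hs2 : s + 1 ≤ n) (h : r + 1 < s) :
    K.ψ s • (K.ψ r • u) = K.ψ r • (K.ψ s • u) := by
  simp only [← mul_smul]
  rw [K.psi_comm r s hr1 hr2 hs1 hs2 h]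

lemma braidSameSmul (K : KLR A n) (r s w : ℕ) (i : ℕ → ZMod 2) (u : M)
    (hs : s = r + 1) (hw : w = r + 2)
    (hr1 : 1 ≤ r) (hr2 : r + 2 ≤ n) (hcond : i r = i s ∨ i s = i w) (hu : K.e i • u = u) :
    K.ψ r • (K.ψ s • (K.ψ r • u)) = K.ψ s • (K.ψ r • (K.ψ s • u)) := by
  subst hs; subst hw
  conv_lhs => rw [← hu]
  conv_rhs => rw [← hu]
  simp only [← mul_smul, ← mul_assoc]
  rw [K.braid_same r i hr1 hr2 hcond]

lemma braidDiffSmul (K : KLR A n) (r s w : ℕ) (i : ℕ → ZMod 2) (u : M)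
    (hs : s = r + 1) (hw : w = r + 2)
    (hr1 : 1 ≤ r) (hr2 : r + 2 ≤ n) (hi1 : i r ≠ i s) (hi2 : i s ≠ i w)
    (hu : K.e i • u = u) (hy : ∀ k, 1 ≤ k → k ≤ n → K.y k • u = 0) :
    K.ψ r • (K.ψ s • (K.ψ r • u)) = K.ψ s • (K.ψ r • (K.ψ s • u)) := by
  subst hs; subst hw
  have hz1 : (K.y r * K.e i) • u = 0 := by
    rw [mul_smul, hu]; exact hy r hr1 (by omega)
  have hz2 : (2 * K.y (r + 1) * K.e i) • u = 0 := by
    rw [mul_assoc, mul_smul, mul_smul, hu, hy (r + 1) (by omega) (by omega)]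
    simp
  have hz3 : (K.y (r + 2) * K.e i) • u = 0 := by
    rw [mul_smul, hu]; exact hy (r + 2) (by omega) hr2
  conv_lhs => rw [← hu]
  conv_rhs => rw [← hu]
  simp only [← mul_smul, ← mul_assoc]
  rw [K.braid_diff r i hr1 hr2 hi1 hi2]
  simp only [add_mul, sub_mul, add_smul, sub_smul, hz1, hz2, hz3]
  abel

/-! ### The invariant `GoodVec` and its preservation under `Ψ_j` -/

lemma PsiBig_expand (K : KLR A n) (c : ℕ) :
    PsiBig K (c + 3) = K.ψ (c + 3) * K.ψ (c + 4) * K.ψ (c + 2) * K.ψ (c + 3) := rfl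

/-- The invariant: residue sequence `iAlt`, killed by all `y_k` and all even `ψ_k`. -/
def GoodVec (K : KLR A n) (u : M) : Prop :=
  K.e iAlt • u = u ∧ (∀ k, 1 ≤ k → k ≤ n → K.y k • u = 0) ∧
    (∀ k, k % 2 = 0 → 1 ≤ k → k + 1 ≤ n → K.ψ k • u = 0)

lemma goodVec_psiBig (K : KLR A n) (t : ℕ) (hn5 : 2*t+5 ≤ n) (u : M) (hu : GoodVec K u) :
    GoodVec K (PsiBig K (2*t+3) • u) := by
  obtain ⟨hue, huy, hup⟩ := hu
  have hPB : PsiBig K (2*t+3) • u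
      = K.ψ (2*t+3) • (K.ψ (2*t+4) • (K.ψ (2*t+2) • (K.ψ (2*t+3) • u))) := by
    rw [PsiBig_expand K (2*t), mul_smul, mul_smul, mul_smul]
  set iA := swapSeq (2*t+3) iAlt with hiA
  set iB := swapSeq (2*t+2) iA with hiB
  set iC := swapSeq (2*t+4) iB with hiC
  have he1 : K.e iA • (K.ψ (2*t+3) • u) = K.ψ (2*t+3) • u :=
    psi_e_smul K (2*t+3) iAlt u (by omega) (by omega) hue
  have he2 : K.e iB • (K.ψ (2*t+2) • (K.ψ (2*t+3) • u)) = K.ψ (2*t+2) • (K.ψ (2*t+3) • u) :=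
    psi_e_smul K (2*t+2) iA _ (by omega) (by omega) he1
  have he3 : K.e iC • (K.ψ (2*t+4) • (K.ψ (2*t+2) • (K.ψ (2*t+3) • u)))
      = K.ψ (2*t+4) • (K.ψ (2*t+2) • (K.ψ (2*t+3) • u)) :=
    psi_e_smul K (2*t+4) iB _ (by omega) (by omega) he2
  have vA1 : iA (2*t+2) = iAlt (2*t+2) := by
    rw [hiA]; exact swap_eval (2*t+3) iAlt (2*t+2) (2*t+2) (by omega)
  have vA2 : iA (2*t+3) = iAlt (2*t+4) := by
    rw [hiA]; exact swap_eval (2*t+3) iAlt (2*t+3) (2*t+4) (by omega)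
  have vA3 : iA (2*t+4) = iAlt (2*t+3) := by
    rw [hiA]; exact swap_eval (2*t+3) iAlt (2*t+4) (2*t+3) (by omega)
  have vA5 : iA (2*t+5) = iAlt (2*t+5) := by
    rw [hiA]; exact swap_eval (2*t+3) iAlt (2*t+5) (2*t+5) (by omega)
  have vB2 : iB (2*t+2) = iAlt (2*t+4) := by
    rw [hiB, swap_eval (2*t+2) iA (2*t+2) (2*t+3) (by omega)]; exact vA2
  have vB3 : iB (2*t+3) = iAlt (2*t+2) := by
    rw [hiB, swap_eval (2*t+2) iA (2*t+3) (2*t+2) (by omega)]; exact vA1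
  have vB4 : iB (2*t+4) = iAlt (2*t+3) := by
    rw [hiB, swap_eval (2*t+2) iA (2*t+4) (2*t+4) (by omega)]; exact vA3
  have vB5 : iB (2*t+5) = iAlt (2*t+5) := by
    rw [hiB, swap_eval (2*t+2) iA (2*t+5) (2*t+5) (by omega)]; exact vA5
  have vC2 : iC (2*t+2) = iAlt (2*t+4) := by
    rw [hiC, swap_eval (2*t+4) iB (2*t+2) (2*t+2) (by omega)]; exact vB2
  have vC3 : iC (2*t+3) = iAlt (2*t+2) := by
    rw [hiC, swap_eval (2*t+4) iB (2*t+3) (2*t+3) (by omega)]; exact vB3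
  have vC4 : iC (2*t+4) = iAlt (2*t+5) := by
    rw [hiC, swap_eval (2*t+4) iB (2*t+4) (2*t+5) (by omega)]; exact vB5
  have vC5 : iC (2*t+5) = iAlt (2*t+3) := by
    rw [hiC, swap_eval (2*t+4) iB (2*t+5) (2*t+4) (by omega)]; exact vB4
  have hp2 : K.ψ (2*t+2) • u = 0 := hup (2*t+2) (by omega) (by omega) (by omega)
  have hp4 : K.ψ (2*t+4) • u = 0 := hup (2*t+4) (by omega) (by omega) (by omega)
  have hbb2 : K.ψ (2*t+3) • (K.ψ (2*t+4) • (K.ψ (2*t+3) • u)) = 0 := by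
    rw [braidDiffSmul K (2*t+3) (2*t+4) (2*t+5) iAlt u (by omega) (by omega) (by omega)
      (by omega) (iAlt_ne (by omega)) (iAlt_ne (by omega)) hue huy, hp4, smul_zero, smul_zero]
  have hbb : K.ψ (2*t+3) • (K.ψ (2*t+2) • (K.ψ (2*t+3) • u)) = 0 := by
    have h := braidDiffSmul K (2*t+2) (2*t+3) (2*t+4) iAlt u (by omega) (by omega) (by omega)
      (by omega) (iAlt_ne (by omega)) (iAlt_ne (by omega)) hue huy
    rw [hp2, smul_zero, smul_zero] at h
    exact h.symm
  refine ⟨?_, ?_, ?_⟩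
  · -- the idempotent
    have hfun : swapSeq (2*t+3) iC = iAlt := by
      funext k
      by_cases h1 : k = 2*t+2
      · subst h1
        rw [swap_eval (2*t+3) iC (2*t+2) (2*t+2) (by omega), vC2]
        exact iAlt_eq (by omega)
      by_cases h2 : k = 2*t+3
      · subst h2
        rw [swap_eval (2*t+3) iC (2*t+3) (2*t+4) (by omega), vC4]
        exact iAlt_eq (by omega)
      by_cases h3 : k = 2*t+4
      · subst h3
        rw [swap_eval (2*t+3) iC (2*t+4) (2*t+3) (by omega), vC3]
        exact iAlt_eq (by omega)
      by_cases h4 : k = 2*t+5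
      · subst h4
        rw [swap_eval (2*t+3) iC (2*t+5) (2*t+5) (by omega), vC5]
        exact iAlt_eq (by omega)
      · rw [swap_eval (2*t+3) iC k k (by omega), hiC,
          swap_eval (2*t+4) iB k k (by omega), hiB,
          swap_eval (2*t+2) iA k k (by omega), hiA,
          swap_eval (2*t+3) iAlt k k (by omega)]
    rw [hPB]
    have h := psi_e_smul K (2*t+3) iC _ (by omega) (by omega) he3
    rw [hfun] at h
    exact h
  · -- the y's
    intro k hk1 hk2
    rw [hPB]
    by_cases h1 : k = 2*t+2
    · subst h1
      rw [yPsiComm K (2*t+3) (2*t+2) _ (by omega) (by omega) (by omega) (by omega)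
          (by omega) (by omega),
        yPsiComm K (2*t+4) (2*t+2) _ (by omega) (by omega) (by omega) (by omega)
          (by omega) (by omega),
        yPsiSame K (2*t+2) (2*t+3) iA _ (by omega) (by omega) (by omega)
          (by rw [vA1, vA2]; exact iAlt_eq (by omega)) he1,
        yPsiDiff K (2*t+3) (2*t+4) iAlt u (by omega) (by omega) (by omega)
          (iAlt_ne (by omega)) hue,
        huy (2*t+4) (by omega) (by omega), smul_zero, smul_zero, zero_sub,
        smul_neg, smul_neg, hbb2, neg_zero]
    by_cases h2 : k = 2*t+3
    · subst h2
      rw [yPsiDiff K (2*t+3) (2*t+4) iC _ (by omega) (by omega) (by omega)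
          (by rw [vC3, vC4]; exact iAlt_ne (by omega)) he3,
        yPsiSame K (2*t+4) (2*t+5) iB _ (by omega) (by omega) (by omega)
          (by rw [vB4, vB5]; exact iAlt_eq (by omega)) he2,
        yPsiComm K (2*t+2) (2*t+5) _ (by omega) (by omega) (by omega) (by omega)
          (by omega) (by omega),
        yPsiComm K (2*t+3) (2*t+5) u (by omega) (by omega) (by omega) (by omega)
          (by omega) (by omega),
        huy (2*t+5) (by omega) (by omega), smul_zero, smul_zero, smul_zero, zero_sub,
        smul_neg, hbb, neg_zero]
    by_cases h3 : k = 2*t+4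
    · subst h3
      rw [yPsiDiff' K (2*t+3) (2*t+4) iC _ (by omega) (by omega) (by omega)
          (by rw [vC3, vC4]; exact iAlt_ne (by omega)) he3,
        yPsiComm K (2*t+4) (2*t+3) _ (by omega) (by omega) (by omega) (by omega)
          (by omega) (by omega),
        yPsiSame' K (2*t+2) (2*t+3) iA _ (by omega) (by omega) (by omega)
          (by rw [vA1, vA2]; exact iAlt_eq (by omega)) he1,
        yPsiComm K (2*t+3) (2*t+2) u (by omega) (by omega) (by omega) (by omega)
          (by omega) (by omega),
        huy (2*t+2) (by omega) (by omega), smul_zero, smul_zero, zero_add, hbb2]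
    by_cases h4 : k = 2*t+5
    · subst h4
      rw [yPsiComm K (2*t+3) (2*t+5) _ (by omega) (by omega) (by omega) (by omega)
          (by omega) (by omega),
        yPsiSame' K (2*t+4) (2*t+5) iB _ (by omega) (by omega) (by omega)
          (by rw [vB4, vB5]; exact iAlt_eq (by omega)) he2,
        yPsiComm K (2*t+2) (2*t+4) _ (by omega) (by omega) (by omega) (by omega)
          (by omega) (by omega),
        yPsiDiff' K (2*t+3) (2*t+4) iAlt u (by omega) (by omega) (by omega)
          (iAlt_ne (by omega)) hue,
        huy (2*t+3) (by omega) (by omega), smul_zero, smul_zero, smul_zero, zero_add, hbb]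
    · rw [yPsiComm K (2*t+3) k _ (by omega) (by omega) (by omega) (by omega)
          (by omega) (by omega),
        yPsiComm K (2*t+4) k _ (by omega) (by omega) (by omega) (by omega)
          (by omega) (by omega),
        yPsiComm K (2*t+2) k _ (by omega) (by omega) (by omega) (by omega)
          (by omega) (by omega),
        yPsiComm K (2*t+3) k u (by omega) (by omega) (by omega) (by omega)
          (by omega) (by omega),
        huy k hk1 hk2, smul_zero, smul_zero, smul_zero, smul_zero]
  · -- the even psi's
    intro k hke hk1 hk2
    rw [hPB]
    by_cases h1 : k = 2*t+2
    · subst h1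
      rw [psiComm K (2*t+2) (2*t+4) _ (by omega) (by omega) (by omega) (by omega) (by omega),
        braidSameSmul K (2*t+2) (2*t+3) (2*t+4) (swapSeq (2*t+4) iA) _ (by omega) (by omega)
          (by omega) (by omega)
          (Or.inl (by
            rw [swap_eval (2*t+4) iA (2*t+2) (2*t+2) (by omega),
              swap_eval (2*t+4) iA (2*t+3) (2*t+3) (by omega), vA1, vA2]
            exact iAlt_eq (by omega)))
          (psi_e_smul K (2*t+4) iA _ (by omega) (by omega) he1),
        hbb2, smul_zero, smul_zero]
    by_cases h2 : k = 2*t+4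
    · subst h2
      rw [← braidSameSmul K (2*t+3) (2*t+4) (2*t+5) iB _ (by omega) (by omega)
          (by omega) (by omega)
          (Or.inr (by rw [vB4, vB5]; exact iAlt_eq (by omega))) he2,
        hbb, smul_zero, smul_zero]
    by_cases h3 : k < 2*t+2
    · rw [← psiComm K k (2*t+3) _ (by omega) (by omega) (by omega) (by omega) (by omega),
        ← psiComm K k (2*t+4) _ (by omega) (by omega) (by omega) (by omega) (by omega),
        ← psiComm K k (2*t+2) _ (by omega) (by omega) (by omega) (by omega) (by omega),
        ← psiComm K k (2*t+3) u (by omega) (by omega) (by omega) (by omega) (by omega),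
        hup k hke hk1 hk2, smul_zero, smul_zero, smul_zero, smul_zero]
    · have h6 : 2*t+6 ≤ k := by omega
      rw [psiComm K (2*t+3) k _ (by omega) (by omega) (by omega) (by omega) (by omega),
        psiComm K (2*t+4) k _ (by omega) (by omega) (by omega) (by omega) (by omega),
        psiComm K (2*t+2) k _ (by omega) (by omega) (by omega) (by omega) (by omega),
        psiComm K (2*t+3) k u (by omega) (by omega) (by omega) (by omega) (by omega),
        hup k hke hk1 hk2, smul_zero, smul_zero, smul_zero, smul_zero]

/-! ### Chains and products -/

lemma chainD_self (K : KLR A n) (y : ℕ) : chainD K y y = PsiBig K y := by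
  rw [chainD, show (y + 2 - y) / 2 = 1 by omega, show List.range 1 = [0] from rfl]
  simp

lemma chainD_peel_last (K : KLR A n) (m y : ℕ) :
    chainD K (y + 2*(m+1)) y = chainD K (y + 2*(m+1)) (y+2) * PsiBig K y := by
  rw [chainD, chainD, show (y + 2*(m+1) + 2 - y) / 2 = m + 2 by omega,
    show (y + 2*(m+1) + 2 - (y+2)) / 2 = m + 1 by omega,
    List.range_succ, List.map_append, List.prod_append]
  simp [show y + 2*(m+1) - 2*(m+1) = y by omega]

lemma chainD_peel_first (K : KLR A n) (m y : ℕ) :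
    chainD K (y + 2*(m+1)) y = PsiBig K (y + 2*(m+1)) * chainD K (y + 2*m) y := by
  rw [chainD, chainD, show (y + 2*(m+1) + 2 - y) / 2 = m + 2 by omega,
    show (y + 2*m + 2 - y) / 2 = m + 1 by omega,
    List.range_succ_eq_map, List.map_cons, List.prod_cons, List.map_map,
    show y + 2*(m+1) - 2*0 = y + 2*(m+1) by omega]
  refine congrArg _ (congrArg List.prod (List.map_congr_left ?_))
  intro k _
  show PsiBig K (y + 2*(m+1) - 2 * (k+1)) = PsiBig K (y + 2*m - 2*k)
  congr 1
  omega

lemma normProd_nil (K : KLR A n) (c : ℕ) : normProd K c [] = 1 := rfl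

lemma normProd_cons (K : KLR A n) (c j : ℕ) (rest : List ℕ) :
    normProd K c (j :: rest) = chainD K j c * normProd K (c+2) rest := rfl

/-- Validity data for the normal form with base `c`. -/
def GoodL (n : ℕ) : ℕ → List ℕ → Prop
  | _, [] => True
  | c, j :: rest => j % 2 = 1 ∧ c ≤ j ∧ j + 2 ≤ n ∧ GoodL n (c+2) rest

lemma goodVec_chainD (K : KLR A n) (m : ℕ) : ∀ (y : ℕ) (u : M), y % 2 = 1 → 3 ≤ y →
    y + 2*m + 2 ≤ n → GoodVec K u → GoodVec K (chainD K (y + 2*m) y • u) := by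
  induction m with
  | zero =>
    intro y u hodd h3 hn2 hu
    rw [show y + 2*0 = y by omega, chainD_self]
    obtain ⟨t, rfl⟩ : ∃ t, y = 2*t+3 := ⟨(y-3)/2, by omega⟩
    exact goodVec_psiBig K t (by omega) u hu
  | succ m ih =>
    intro y u hodd h3 hn2 hu
    rw [chainD_peel_last, mul_smul,
      show y + 2*(m+1) = (y+2) + 2*m by omega]
    obtain ⟨t, rfl⟩ : ∃ t, y = 2*t+3 := ⟨(y-3)/2, by omega⟩
    exact ih (2*t+3+2) (PsiBig K (2*t+3) • u) (by omega) (by omega) (by omega)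
      (goodVec_psiBig K t (by omega) u hu)

lemma goodVec_normProd (K : KLR A n) (p : List ℕ) : ∀ (c : ℕ) (u : M), c % 2 = 1 → 3 ≤ c →
    GoodL n c p → GoodVec K u → GoodVec K (normProd K c p • u) := by
  induction p with
  | nil => intro c u _ _ _ hu; rw [normProd_nil, one_smul]; exact hu
  | cons j rest ih =>
    intro c u hodd h3 hg hu
    obtain ⟨hj, hcj, hjn, hgrest⟩ := hg
    rw [normProd_cons, mul_smul]
    obtain ⟨m, rfl⟩ : ∃ m, j = c + 2*m := ⟨(j-c)/2, by omega⟩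
    exact goodVec_chainD K m c _ hodd h3 (by omega)
      (ih (c+2) u (by omega) (by omega) hgrest hu)

/-! ### Words and commutation -/

lemma ascWord_zero (K : KLR A n) : ascWord K 1 0 = 1 := by
  rw [ascWord, show 0 + 1 - 1 = 0 by omega]
  rfl

lemma ascWord_succ (K : KLR A n) (x y : ℕ) (h : x ≤ y + 1) :
    ascWord K x (y+1) = ascWord K x y * K.ψ (y+1) := by
  rw [ascWord, ascWord, psiWord, psiWord, show y + 1 + 1 - x = (y + 1 - x) + 1 by omega,
    List.range_succ, List.map_append, List.map_append, List.prod_append]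
  congr 2
  simp [show x + (y + 1 - x) = y + 1 by omega]

lemma ascWord_one_one (K : KLR A n) : ascWord K 1 1 = K.ψ 1 := by
  rw [show (1:ℕ) = 0 + 1 from rfl, ascWord_succ K 1 0 (by omega), ascWord_zero, one_mul]

lemma comm_mul {a b s : A} (h1 : s * a = a * s) (h2 : s * b = b * s) :
    s * (a * b) = (a * b) * s := by
  rw [← mul_assoc, h1, mul_assoc, h2, ← mul_assoc]

lemma ascWord_comm (K : KLR A n) (m : ℕ) (g : A)
    (h : ∀ s, 1 ≤ s → s ≤ m → K.ψ s * g = g * K.ψ s) :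
    ascWord K 1 m * g = g * ascWord K 1 m := by
  induction m with
  | zero => rw [ascWord_zero, one_mul, mul_one]
  | succ m ih =>
    rw [ascWord_succ K 1 m (by omega), mul_assoc, h (m+1) (by omega) le_rfl, ← mul_assoc,
      ih (fun s h1 h2 => h s h1 (by omega)), mul_assoc]

lemma psi_psiBig_comm (K : KLR A n) (s t : ℕ) (hs1 : 1 ≤ s) (hs2 : s + 1 ≤ n)
    (hst : s + 3 ≤ t) (htn : t + 2 ≤ n) : K.ψ s * PsiBig K t = PsiBig K t * K.ψ s := by
  obtain ⟨c, rfl⟩ : ∃ c, t = c + 3 := ⟨t - 3, by omega⟩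
  rw [PsiBig_expand]
  have h1 : K.ψ s * K.ψ (c+3) = K.ψ (c+3) * K.ψ s :=
    (K.psi_comm s (c+3) hs1 hs2 (by omega) (by omega) (by omega)).symm
  have h2 : K.ψ s * K.ψ (c+4) = K.ψ (c+4) * K.ψ s :=
    (K.psi_comm s (c+4) hs1 hs2 (by omega) (by omega) (by omega)).symm
  have h3 : K.ψ s * K.ψ (c+2) = K.ψ (c+2) * K.ψ s :=
    (K.psi_comm s (c+2) hs1 hs2 (by omega) (by omega) (by omega)).symm
  exact comm_mul (comm_mul (comm_mul h1 h2) h3) h1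

lemma psi_chainD_comm (K : KLR A n) (s y m : ℕ) (hs1 : 1 ≤ s) (hs2 : s + 1 ≤ n)
    (hsy : s + 3 ≤ y) (h : y + 2*m + 2 ≤ n) :
    K.ψ s * chainD K (y + 2*m) y = chainD K (y + 2*m) y * K.ψ s := by
  induction m with
  | zero =>
    rw [show y + 2*0 = y by omega, chainD_self]
    exact psi_psiBig_comm K s y hs1 hs2 hsy (by omega)
  | succ m ih =>
    rw [chainD_peel_first]
    exact comm_mul (psi_psiBig_comm K s (y + 2*(m+1)) hs1 hs2 (by omega) (by omega))
      (ih (by omega))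

lemma psi_normProd_comm (K : KLR A n) (p : List ℕ) : ∀ (c s : ℕ), c % 2 = 1 →
    GoodL n c p → 1 ≤ s → s + 1 ≤ n → s + 3 ≤ c →
    K.ψ s * normProd K c p = normProd K c p * K.ψ s := by
  induction p with
  | nil => intro c s _ _ _ _ _; rw [normProd_nil, one_mul, mul_one]
  | cons j rest ih =>
    intro c s hodd hg hs1 hs2 hsc
    obtain ⟨hj, hcj, hjn, hgrest⟩ := hg
    rw [normProd_cons]
    obtain ⟨m, rfl⟩ : ∃ m, j = c + 2*m := ⟨(j-c)/2, by omega⟩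
    exact comm_mul (psi_chainD_comm K s c m hs1 hs2 (by omega) (by omega))
      (ih (c+2) s (by omega) hgrest hs1 hs2 (by omega))

/-! ### The Garnir-type induction -/

lemma garStep (K : KLR A n) (c : ℕ) (h : c + 5 ≤ n) :
    ascWord K 1 (c+1) * PsiBig K (c+3)
      = K.ψ (c+3) * K.ψ (c+4) * ascWord K 1 (c+3) := by
  rw [PsiBig_expand]
  have h1 : ascWord K 1 (c+1) * K.ψ (c+3) = K.ψ (c+3) * ascWord K 1 (c+1) :=
    ascWord_comm K (c+1) _ (fun s hs1 hs2 =>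
      (K.psi_comm s (c+3) hs1 (by omega) (by omega) (by omega) (by omega)).symm)
  have h2 : ascWord K 1 (c+1) * K.ψ (c+4) = K.ψ (c+4) * ascWord K 1 (c+1) :=
    ascWord_comm K (c+1) _ (fun s hs1 hs2 =>
      (K.psi_comm s (c+4) hs1 (by omega) (by omega) (by omega) (by omega)).symm)
  have hab : ascWord K 1 (c+1) * (K.ψ (c+3) * K.ψ (c+4))
      = (K.ψ (c+3) * K.ψ (c+4)) * ascWord K 1 (c+1) := comm_mul h1 h2
  have hW3 : ascWord K 1 (c+3) = ascWord K 1 (c+1) * K.ψ (c+2) * K.ψ (c+3) := by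
    rw [show c+3 = (c+2)+1 by omega, ascWord_succ K 1 (c+2) (by omega),
      show c+2 = (c+1)+1 by omega, ascWord_succ K 1 (c+1) (by omega)]
  calc ascWord K 1 (c+1) * (K.ψ (c+3) * K.ψ (c+4) * K.ψ (c+2) * K.ψ (c+3))
      = ascWord K 1 (c+1) * ((K.ψ (c+3) * K.ψ (c+4)) * (K.ψ (c+2) * K.ψ (c+3))) := by
        rw [mul_assoc (K.ψ (c+3) * K.ψ (c+4)) (K.ψ (c+2)) (K.ψ (c+3))]
    _ = (K.ψ (c+3) * K.ψ (c+4)) * (ascWord K 1 (c+1) * (K.ψ (c+2) * K.ψ (c+3))) := by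
        rw [← mul_assoc, hab, mul_assoc]
    _ = (K.ψ (c+3) * K.ψ (c+4)) * (ascWord K 1 (c+1) * K.ψ (c+2) * K.ψ (c+3)) := by
        rw [mul_assoc (ascWord K 1 (c+1)) (K.ψ (c+2)) (K.ψ (c+3))]
    _ = K.ψ (c+3) * K.ψ (c+4) * ascWord K 1 (c+3) := by rw [hW3]

lemma gar (K : KLR A n) (p : List ℕ) : ∀ (c : ℕ) (u : M), c % 2 = 1 → 3 ≤ c →
    GoodL n c p → ascWord K 1 (c - 2 + 2 * p.length) • u = 0 →
    ascWord K 1 (c - 2) • (normProd K c p • u) = 0 := by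
  induction p with
  | nil =>
    intro c u _ _ _ h0
    rw [normProd_nil, one_smul]
    simpa using h0
  | cons j rest ih =>
    intro c u hodd h3 hg h0
    obtain ⟨hj, hcj, hjn, hgrest⟩ := hg
    have hc2n : c + 2 ≤ n := by omega
    have hw : ascWord K 1 c • (normProd K (c+2) rest • u) = 0 := by
      have h0' : ascWord K 1 (c + 2 - 2 + 2 * rest.length) • u = 0 := by
        rw [show c + 2 - 2 + 2 * rest.length = c - 2 + 2 * (j :: rest).length by
          simp [List.length_cons]; omega]
        exact h0
      have h := ih (c+2) u (by omega) (by omega) hgrest h0'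
      rwa [show c + 2 - 2 = c by omega] at h
    obtain ⟨c', rfl⟩ : ∃ c', c = c' + 3 := ⟨c - 3, by omega⟩
    rw [normProd_cons, mul_smul, show c' + 3 - 2 = c' + 1 by omega]
    obtain ⟨m, rfl⟩ : ∃ m, j = (c' + 3) + 2*m := ⟨(j-(c'+3))/2, by omega⟩
    cases m with
    | zero =>
      rw [show c' + 3 + 2*0 = c' + 3 by omega, chainD_self, ← mul_smul,
        garStep K c' (by omega), mul_smul, mul_smul, hw, smul_zero, smul_zero]
    | succ m' =>
      have hE : ascWord K 1 (c'+1) * chainD K (c' + 3 + 2*(m'+1)) (c'+5)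
          = chainD K (c' + 3 + 2*(m'+1)) (c'+5) * ascWord K 1 (c'+1) := by
        rw [show c' + 3 + 2*(m'+1) = (c' + 5) + 2*m' by omega]
        exact ascWord_comm K (c'+1) _ (fun s hs1 hs2 =>
          psi_chainD_comm K s (c'+5) m' hs1 (by omega) (by omega) (by omega))
      rw [chainD_peel_last, show c' + 3 + 2 = c' + 5 by omega, mul_smul]
      rw [← mul_smul, hE, mul_smul]
      rw [← mul_smul (ascWord K 1 (c'+1)) (PsiBig K (c'+3)), garStep K c' (by omega),
        mul_smul, mul_smul, hw, smul_zero, smul_zero, smul_zero]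

lemma goodL_of (p : List ℕ) : ∀ c : ℕ,
    (∀ i, (h : i < p.length) → (p.get ⟨i, h⟩) % 2 = 1 ∧ c + 2*i ≤ p.get ⟨i, h⟩ ∧
      p.get ⟨i, h⟩ + 2 ≤ n) →
    GoodL n c p := by
  induction p with
  | nil => intro c _; trivial
  | cons j rest ih =>
    intro c h
    have h0 := h 0 (by simp)
    simp only [List.get] at h0
    refine ⟨h0.1, by have := h0.2.1; omega, h0.2.2, ih (c+2) ?_⟩
    intro i hi
    have hh := h (i+1) (by simpa using Nat.succ_lt_succ hi)
    simp only [List.get] at hh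
    exact ⟨hh.1, by have := hh.2.1; omega, hh.2.2⟩

end SpechtAux

/-- Proposition `y-actions`: `e = 2`, `λ = (a, 1^b)` a hook with `b` even.
For every domino tableau `T`, whose basis vector is given in normal form by the data
`p = [j₁ < ⋯ < j_d]`, i.e. `v_T = Ψ↓(j₁, b+3-2d) ⋯ Ψ↓(j_d, b+1) z`:
(a) `y_k v_T = 0` for all `k`; (b) `ψ_k v_T = 0` for all even `k`; (c) `ψ_1 v_T = 0`. -/
theorem specht_hook_domino_y_psi_actions {M : Type*} [AddCommGroup M] [Module A M]
    (a b : ℕ) (hn : n = a + b) (ha : 1 ≤ a) (hb : Even b)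
    (K : KLR A n) (z : M)
    (hy : ∀ k, 1 ≤ k → k ≤ n → K.y k • z = 0)
    (he1 : K.e (iLamGen b) • z = z)
    (he2 : ∀ i, i ≠ iLamGen b → K.e i • z = 0)
    (hpsiz : ∀ j, 1 ≤ j → j + 1 ≤ n → j ≠ b + 1 → K.ψ j • z = 0)
    (hgar : ascWord K 1 (b + 1) • z = 0)
    (p : List ℕ) (hp : NormOK n b p)
    (v : M) (hv : v = normProd K (b + 3 - 2 * p.length) p • z) :
    (∀ k, 1 ≤ k → k ≤ n → K.y k • v = 0) ∧
    (∀ k, Even k → 1 ≤ k → k + 1 ≤ n → K.ψ k • v = 0) ∧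
    K.ψ 1 • v = 0 := by
  have hb0 : b % 2 = 0 := Nat.even_iff.mp hb
  rw [iLam_even hb0] at he1
  have h2d : 2 * p.length ≤ b := hp.1
  have hgood : GoodL n (b + 3 - 2 * p.length) p := by
    apply goodL_of
    intro i h
    obtain ⟨o1, o2, o3⟩ := hp.2.2 i h
    exact ⟨Nat.odd_iff.mp o1, by omega, o3⟩
  have hgz : GoodVec K z := ⟨he1, hy, fun k hk h1 h2 => hpsiz k h1 h2 (by omega)⟩
  have hgv : GoodVec K v := by
    rw [hv]
    exact goodVec_normProd K p (b + 3 - 2 * p.length) z (by omega) (by omega) hgood hgz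
  refine ⟨hgv.2.1, fun k hk h1 h2 => hgv.2.2 k (Nat.even_iff.mp hk) h1 h2, ?_⟩
  by_cases hp0 : p = []
  · subst hp0
    rw [normProd_nil, one_smul] at hv
    rw [hv]
    by_cases hb00 : b = 0
    · subst hb00
      rw [show (0:ℕ)+1 = 1 from rfl, ascWord_one_one] at hgar
      exact hgar
    · exact hpsiz 1 le_rfl (by omega) (by omega)
  · have hd1 : 1 ≤ p.length := by
      have := List.length_pos_iff.mpr hp0
      omega
    have hb2 : 2 ≤ b := by omega
    by_cases hcc : b + 3 - 2 * p.length = 3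
    · have hg0 := gar K p (b + 3 - 2 * p.length) z (by omega) (by omega) hgood
        (by rw [show b + 3 - 2 * p.length - 2 + 2 * p.length = b + 1 by omega]; exact hgar)
      rw [hcc, show (3:ℕ) - 2 = 1 from rfl, ascWord_one_one] at hg0
      rw [hv, hcc]
      exact hg0
    · have hc5 : 5 ≤ b + 3 - 2 * p.length := by omega
      have hcm := psi_normProd_comm K p (b + 3 - 2 * p.length) 1 (by omega) hgood le_rfl
        (by omega) (by omega)
      rw [hv, ← mul_smul, hcm, mul_smul, hpsiz 1 le_rfl (by omega) (by omega), smul_zero]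
end
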